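/- arXiv:1703.07064 — 5 statements merged into one kernel-verified Lean document; each statement's English description precedes it below -/
import Mathlib

section
/- The number of monic separable polynomials of degree d in (ℤ/p)[x], where p is prime and d ≥ 2, is p^d - p^{d-1}. Here a polynomial f over a commutative ring R is separable if R[x]/(f) is a separable R-algebra; for monic f over the field ℤ/p this is equivalent to f being squarefree (equivalently, gcd(f, f') = 1). -/
open Polynomial

section Carlitz

variable {K : Type*} [Field K] [Fintype K] [DecidableEq K]

private lemma carlitz_card_monic (n : ℕ) :
    Nat.card {f : K[X] // f.Monic ∧ f.natDegree = n} = Fintype.card K ^ n := by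
  rw [Nat.card_congr ((monicEquivDegreeLT n).trans (degreeLTEquiv K n).toEquiv)]
  simp [Nat.card_eq_fintype_card]

/-- Uniqueness of the decomposition `a^2 * b` with `b` squarefree. -/
private lemma carlitz_uniq (n : ℕ) :
    ∀ a c b e : K[X], a.natDegree ≤ n → a.Monic → c.Monic → b.Monic → e.Monic →
      Squarefree b → Squarefree e → a ^ 2 * b = c ^ 2 * e → a = c ∧ b = e := by
  induction n with
  | zero =>
    intro a c b e hdeg ha hc hb he hsb hse heq
    have ha1 : a = 1 := ha.natDegree_eq_zero.mp (Nat.le_zero.mp hdeg)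
    subst ha1
    have hcd : c * c ∣ b := ⟨e, by rw [← sq, ← heq]; ring⟩
    have hcu : IsUnit c := hsb c hcd
    have hc1 : c = 1 := hc.eq_one_of_isUnit hcu
    subst hc1
    simpa using heq
  | succ n ih =>
    intro a c b e hdeg ha hc hb he hsb hse heq
    by_cases ha0 : a.natDegree = 0
    · have ha1 : a = 1 := ha.natDegree_eq_zero.mp ha0
      subst ha1
      have hcd : c * c ∣ b := ⟨e, by rw [← sq, ← heq]; ring⟩
      have hcu : IsUnit c := hsb c hcd
      have hc1 : c = 1 := hc.eq_one_of_isUnit hcu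
      subst hc1
      simpa using heq
    · -- a has positive degree, so it has a monic irreducible factor
      have hane : a ≠ 0 := ha.ne_zero
      have hanu : ¬ IsUnit a := by
        intro h
        exact ha0 (by simp [ha.eq_one_of_isUnit h])
      obtain ⟨g, hgi, hgd⟩ := WfDvdMonoid.exists_irreducible_factor hanu hane
      have hg0 : g ≠ 0 := hgi.ne_zero
      set π : K[X] := normalize g with hπ
      have hπm : π.Monic := monic_normalize hg0
      have hπi : Irreducible π := (associated_normalize g).irreducible hgi
      have hπp : Prime π := hπi.prime
      have hπa : π ∣ a := (normalize_dvd_iff).mpr hgd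
      have hπ0 : π ≠ 0 := hπm.ne_zero
      -- π divides c
      have hπc : π ∣ c := by
        by_contra hnc
        have hcop : IsCoprime π c := hπp.coprime_iff_not_dvd.mpr hnc
        have hcop2 : IsCoprime (π ^ 2) (c ^ 2) := hcop.pow
        have hdvd : π ^ 2 ∣ c ^ 2 * e := by
          have h' : π ^ 2 ∣ a ^ 2 * b := Dvd.dvd.mul_right (pow_dvd_pow_of_dvd hπa 2) b
          rwa [heq] at h'
        have hπe : π ^ 2 ∣ e := hcop2.dvd_of_dvd_mul_left hdvd
        exact hπi.not_isUnit (hse π (by rwa [← sq]))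
      obtain ⟨a₁, rfl⟩ := hπa
      obtain ⟨c₁, rfl⟩ := hπc
      have ha₁ : a₁.Monic := hπm.of_mul_monic_left ha
      have hc₁ : c₁.Monic := hπm.of_mul_monic_left hc
      have hπd : 1 ≤ π.natDegree := hπi.natDegree_pos
      have hdeg₁ : a₁.natDegree ≤ n := by
        have := hπm.natDegree_mul ha₁
        omega
      have heq₁ : a₁ ^ 2 * b = c₁ ^ 2 * e := by
        have h2 : π ^ 2 * (a₁ ^ 2 * b) = π ^ 2 * (c₁ ^ 2 * e) := by
          calc π ^ 2 * (a₁ ^ 2 * b) = (π * a₁) ^ 2 * b := by ring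
            _ = (π * c₁) ^ 2 * e := heq
            _ = π ^ 2 * (c₁ ^ 2 * e) := by ring
        exact mul_left_cancel₀ (pow_ne_zero 2 hπ0) h2
      obtain ⟨hac, hbe⟩ := ih a₁ c₁ b e hdeg₁ ha₁ hc₁ hb he hsb hse heq₁
      exact ⟨by rw [hac], hbe⟩

private lemma carlitz_exists (n : ℕ) :
    ∀ f : K[X], f.natDegree ≤ n → f.Monic →
      ∃ a b : K[X], a.Monic ∧ b.Monic ∧ Squarefree b ∧ f = a ^ 2 * b := by
  induction n with
  | zero =>
    intro f hdeg hf
    refine ⟨1, f, monic_one, hf, ?_, by ring⟩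
    have h1 : f = 1 := hf.natDegree_eq_zero.mp (Nat.le_zero.mp hdeg)
    rw [h1]; exact squarefree_one
  | succ n ih =>
    intro f hdeg hf
    by_cases hsf : Squarefree f
    · exact ⟨1, f, monic_one, hf, hsf, by ring⟩
    · rw [Squarefree] at hsf
      push_neg at hsf
      obtain ⟨g, hgd, hgu⟩ := hsf
      have hf0 : f ≠ 0 := hf.ne_zero
      have hg0 : g ≠ 0 := by
        rintro rfl
        rw [zero_mul, zero_dvd_iff] at hgd
        exact hf0 hgd
      set π : K[X] := normalize g with hπdef
      have hπm : π.Monic := monic_normalize hg0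
      have hπg : π ∣ g := normalize_dvd_iff.mpr dvd_rfl
      have hπu : ¬ IsUnit π := by
        intro h
        exact hgu ((associated_normalize g).symm.isUnit h)
      have hπd : π * π ∣ f := (mul_dvd_mul hπg hπg).trans hgd
      have hπdeg : 1 ≤ π.natDegree := by
        rcases Nat.eq_zero_or_pos π.natDegree with h0 | h1
        · exact absurd (hπm.natDegree_eq_zero.mp h0 ▸ isUnit_one) hπu
        · exact h1
      obtain ⟨h, hfh⟩ := hπd
      have hhm : h.Monic := (hπm.mul hπm).of_mul_monic_left (hfh ▸ hf)
      have hhdeg : h.natDegree ≤ n := by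
        have h1 := (hπm.mul hπm).natDegree_mul hhm
        have h2 := hπm.natDegree_mul hπm
        rw [← hfh] at h1
        omega
      obtain ⟨a, b, ham, hbm, hsb, hab⟩ := ih h hhdeg hhm
      exact ⟨π * a, b, hπm.mul ham, hbm, hsb, by rw [hfh, hab]; ring⟩

private instance carlitzFin1 (n : ℕ) : Finite {f : K[X] // f.Monic ∧ f.natDegree = n} :=
  Finite.of_equiv _ ((monicEquivDegreeLT n).trans (degreeLTEquiv K n).toEquiv).symm

private instance carlitzFin2 (n : ℕ) :
    Finite {b : K[X] // b.Monic ∧ b.natDegree = n ∧ Squarefree b} :=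
  Finite.of_injective
    (fun b => (⟨b.1, b.2.1, b.2.2.1⟩ : {f : K[X] // f.Monic ∧ f.natDegree = n}))
    (by intro x y h; rw [Subtype.mk.injEq, ← Subtype.ext_iff] at h; exact h)

variable (K) in
private noncomputable def carlitzS (n : ℕ) : ℕ :=
  Nat.card {b : K[X] // b.Monic ∧ b.natDegree = n ∧ Squarefree b}

private lemma carlitz_key (d : ℕ) :
    Fintype.card K ^ d
      = ∑ i ∈ Finset.range (d / 2 + 1), Fintype.card K ^ i * carlitzS K (d - 2 * i) := by
  classical
  set T := Σ i : Fin (d / 2 + 1),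
      {a : K[X] // a.Monic ∧ a.natDegree = (i : ℕ)} ×
      {b : K[X] // b.Monic ∧ b.natDegree = d - 2 * (i : ℕ) ∧ Squarefree b} with hT
  have h2le : ∀ i : Fin (d / 2 + 1), 2 * (i : ℕ) ≤ d := by
    intro i
    have := i.2
    omega
  let G : T → {f : K[X] // f.Monic ∧ f.natDegree = d} := fun x =>
    ⟨x.2.1.1 ^ 2 * x.2.2.1, (x.2.1.2.1.pow 2).mul x.2.2.2.1, by
      rw [(((x.2.1.2.1.pow 2)).natDegree_mul x.2.2.2.1), natDegree_pow, x.2.1.2.2, x.2.2.2.2.1]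
      have := h2le x.1
      omega⟩
  have hGbij : Function.Bijective G := by
    constructor
    · rintro ⟨i, ⟨a, ham, hai⟩, ⟨b, hbm, hbi, hsb⟩⟩ ⟨j, ⟨c, hcm, hcj⟩, ⟨e, hem, hej, hse⟩⟩ h
      have heq : a ^ 2 * b = c ^ 2 * e := congrArg Subtype.val h
      obtain ⟨hac, hbe⟩ :=
        carlitz_uniq a.natDegree a c b e le_rfl ham hcm hbm hem hsb hse heq
      have hij : i = j := Fin.ext (by rw [← hai, ← hcj, hac])
      subst hij
      subst hac
      subst hbe
      rfl
    · rintro ⟨f, hfm, hfd⟩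
      obtain ⟨a, b, ham, hbm, hsb, hab⟩ := carlitz_exists f.natDegree f le_rfl hfm
      have hdeg : 2 * a.natDegree + b.natDegree = d := by
        have h1 := (ham.pow 2).natDegree_mul hbm
        rw [← hab, natDegree_pow, hfd] at h1
        omega
      refine ⟨⟨⟨a.natDegree, by omega⟩, ⟨a, ham, rfl⟩, ⟨b, hbm, by show b.natDegree = d - 2 * a.natDegree; omega, hsb⟩⟩, ?_⟩
      exact Subtype.ext hab.symm
  letI : ∀ i : Fin (d / 2 + 1), Fintype {a : K[X] // a.Monic ∧ a.natDegree = (i : ℕ)} :=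
    fun i => Fintype.ofFinite _
  letI : ∀ i : Fin (d / 2 + 1),
      Fintype {b : K[X] // b.Monic ∧ b.natDegree = d - 2 * (i : ℕ) ∧ Squarefree b} :=
    fun i => Fintype.ofFinite _
  calc Fintype.card K ^ d = Nat.card {f : K[X] // f.Monic ∧ f.natDegree = d} :=
        (carlitz_card_monic d).symm
    _ = Nat.card T := Nat.card_congr (Equiv.ofBijective G hGbij).symm
    _ = ∑ i : Fin (d / 2 + 1), Fintype.card K ^ (i : ℕ) * carlitzS K (d - 2 * (i : ℕ)) := by
        rw [Nat.card_eq_fintype_card, Fintype.card_sigma]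
        refine Finset.sum_congr rfl fun i _ => ?_
        rw [Fintype.card_prod]
        congr 1
        · rw [← Nat.card_eq_fintype_card, carlitz_card_monic]
        · rw [carlitzS, Nat.card_eq_fintype_card]
    _ = ∑ i ∈ Finset.range (d / 2 + 1), Fintype.card K ^ i * carlitzS K (d - 2 * i) :=
        Fin.sum_univ_eq_sum_range (fun i => Fintype.card K ^ i * carlitzS K (d - 2 * i)) _

private lemma carlitz_count (d : ℕ) (hd : 2 ≤ d) :
    carlitzS K d = Fintype.card K ^ d - Fintype.card K ^ (d - 1) := by
  set q := Fintype.card K with hq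
  have h1 := carlitz_key (K := K) d
  rw [Finset.sum_range_succ'] at h1
  have h2 : ∑ i ∈ Finset.range (d / 2), q ^ (i + 1) * carlitzS K (d - 2 * (i + 1))
      = q ^ (d - 1) := by
    have h3 : ∑ i ∈ Finset.range (d / 2), q ^ (i + 1) * carlitzS K (d - 2 * (i + 1))
        = q * ∑ i ∈ Finset.range ((d - 2) / 2 + 1), q ^ i * carlitzS K ((d - 2) - 2 * i) := by
      rw [Finset.mul_sum]
      have hr : d / 2 = (d - 2) / 2 + 1 := by omega
      rw [hr]
      refine Finset.sum_congr rfl fun i _ => ?_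
      have he : d - 2 * (i + 1) = (d - 2) - 2 * i := by omega
      rw [he, pow_succ]
      ring
    rw [h3, ← carlitz_key (K := K) (d - 2)]
    rw [← pow_succ']
    congr 1
    omega
  rw [h2] at h1
  simp only [pow_zero, one_mul, Nat.mul_zero, Nat.sub_zero] at h1
  rw [← hq] at h1
  omega

end Carlitz

/-- Carlitz: the number of monic separable polynomials of degree `d ≥ 2` over `ℤ/p`
is `p^d - p^(d-1)`. -/
theorem count_monic_separable_zmod_p (p d : ℕ) (hp : p.Prime) (hd : 2 ≤ d) :
    Nat.card {f : (ZMod p)[X] | f.Monic ∧ f.natDegree = d ∧ f.Separable}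
      = p ^ d - p ^ (d - 1) := by
  haveI : Fact p.Prime := ⟨hp⟩
  have hset : {f : (ZMod p)[X] | f.Monic ∧ f.natDegree = d ∧ f.Separable}
      = {f : (ZMod p)[X] | f.Monic ∧ f.natDegree = d ∧ Squarefree f} := by
    ext f
    simp only [Set.mem_setOf_eq, PerfectField.separable_iff_squarefree]
  rw [hset]
  have h := carlitz_count (K := ZMod p) d hd
  rw [ZMod.card] at h
  exact h
end

section
/- The number of monic separable polynomials of degree d in (ℤ/p^k)[x], for p prime, k ≥ 1 and d ≥ 2, is p^{kd-1}(p-1) = φ(p^{kd}), where φ is Euler's totient function. -/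
open Polynomial

section FieldSide

variable {F : Type*} [Field F]

private lemma monic_assoc_of_irreducible' {q : F[X]} (hq : Irreducible q) :
    ∃ q1 : F[X], q1.Monic ∧ Irreducible q1 ∧ Associated q q1 := by
  have hq0 : q ≠ 0 := hq.ne_zero
  have hu : IsUnit (C q.leadingCoeff⁻¹) :=
    isUnit_C.2 (isUnit_iff_ne_zero.2 (inv_ne_zero (leadingCoeff_ne_zero.2 hq0)))
  have ha : Associated q (q * C q.leadingCoeff⁻¹) := associated_mul_unit_right _ _ hu
  exact ⟨_, monic_mul_leadingCoeff_inv hq0, ha.irreducible hq, ha⟩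

private lemma sq_decomp_unique' : ∀ n : ℕ, ∀ m s s' m' : F[X], m.natDegree = n →
    s.Monic → m.Monic → s'.Monic → m'.Monic → Squarefree s → Squarefree s' →
    s * m ^ 2 = s' * m' ^ 2 → s = s' ∧ m = m' := by
  intro n
  induction n using Nat.strong_induction_on with
  | _ n ih =>
    intro m s s' m' hmn hsM hmM hs'M hm'M hs hs' heq
    by_cases hm : IsUnit m
    · have hm1 : m = 1 := hmM.eq_one_of_isUnit hm
      subst hm1
      have hdvd : m' * m' ∣ s := ⟨s', by rw [← mul_comm s', ← pow_two]; linear_combination heq⟩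
      have hm'1 : m' = 1 := hm'M.eq_one_of_isUnit (hs m' hdvd)
      subst hm'1
      simpa using heq
    · obtain ⟨q0, hq0i, hq0d⟩ := WfDvdMonoid.exists_irreducible_factor hm hmM.ne_zero
      obtain ⟨q, hqM, hqi, hqa⟩ := monic_assoc_of_irreducible' hq0i
      have hqd : q ∣ m := hqa.dvd_iff_dvd_left.mp hq0d
      have hqp : Prime q := hqi.prime
      have hq0 : q ≠ 0 := hqM.ne_zero
      have hqm' : q ∣ m' := by
        by_contra hqm'
        have h1 : q ∣ s' * m' ^ 2 := heq ▸ (hqd.trans (dvd_pow_self m two_ne_zero)).mul_left s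
        have h2 : q ∣ s' := by
          rcases hqp.dvd_mul.mp h1 with h | h
          · exact h
          · exact absurd (hqp.dvd_of_dvd_pow h) hqm'
        obtain ⟨u, hu⟩ := h2
        have h3 : q ^ 2 ∣ s' * m' ^ 2 := heq ▸ (pow_dvd_pow_of_dvd hqd 2).mul_left s
        obtain ⟨t, ht⟩ := h3
        have h4 : u * m' ^ 2 = q * t := by
          have : q * (u * m' ^ 2) = q * (q * t) := by
            rw [← mul_assoc, ← hu, ← mul_assoc, ← pow_two, ← ht]
          exact mul_left_cancel₀ hq0 this
        have h5 : q ∣ u := by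
          rcases hqp.dvd_mul.mp (h4 ▸ Dvd.intro t rfl) with h | h
          · exact h
          · exact absurd (hqp.dvd_of_dvd_pow h) hqm'
        obtain ⟨v, hv⟩ := h5
        exact hqp.not_unit (hs' q ⟨v, by rw [hu, hv]; ring⟩)
      obtain ⟨a, ha⟩ := hqd
      obtain ⟨b, hb⟩ := hqm'
      have haM : a.Monic := Monic.of_mul_monic_left hqM (ha ▸ hmM)
      have hbM : b.Monic := Monic.of_mul_monic_left hqM (hb ▸ hm'M)
      have heq2 : s * a ^ 2 = s' * b ^ 2 := by
        have h : q ^ 2 * (s * a ^ 2) = q ^ 2 * (s' * b ^ 2) := by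
          rw [ha, hb] at heq; linear_combination heq
        exact mul_left_cancel₀ (pow_ne_zero 2 hq0) h
      have hdeg : a.natDegree < n := by
        have h1 : m.natDegree = q.natDegree + a.natDegree :=
          ha ▸ natDegree_mul hq0 haM.ne_zero
        have h2 : 0 < q.natDegree := hqi.natDegree_pos
        omega
      obtain ⟨h1, h2⟩ := ih _ hdeg a s s' b rfl hsM haM hs'M hbM hs hs' heq2
      exact ⟨h1, by rw [ha, hb, h2]⟩

private lemma exists_sq_decomp' : ∀ n : ℕ, ∀ f : F[X], f.Monic → f.natDegree = n →
    ∃ s m : F[X], s.Monic ∧ m.Monic ∧ Squarefree s ∧ f = s * m ^ 2 := by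
  intro n
  induction n using Nat.strong_induction_on with
  | _ n ih =>
    intro f hf hfn
    by_cases hsf : Squarefree f
    · exact ⟨f, 1, hf, monic_one, hsf, by ring⟩
    · have hf0 : f ≠ 0 := hf.ne_zero
      rw [squarefree_iff_no_irreducibles hf0] at hsf
      push_neg at hsf
      obtain ⟨q, hqi, hqd⟩ := hsf
      obtain ⟨q1, hq1m, hq1i, hq1a⟩ := monic_assoc_of_irreducible' hqi
      have hqd1 : q1 * q1 ∣ f := (Associated.mul_mul hq1a hq1a).dvd_iff_dvd_left.mp hqd
      obtain ⟨g, hg⟩ := hqd1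
      have hgm : g.Monic := by
        have := hf
        rw [hg] at this
        exact Monic.of_mul_monic_left (hq1m.mul hq1m) this
      have hqdeg : 0 < q1.natDegree := hq1i.natDegree_pos
      have hdeg : g.natDegree < n := by
        have h1 : f.natDegree = (q1*q1).natDegree + g.natDegree := by
          rw [hg, natDegree_mul (mul_ne_zero hq1m.ne_zero hq1m.ne_zero) hgm.ne_zero]
        have h2 : (q1*q1).natDegree = 2 * q1.natDegree := by
          rw [natDegree_mul hq1m.ne_zero hq1m.ne_zero]; ring
        omega
      obtain ⟨s, m, hsm, hmm, hss, hgsm⟩ := ih _ hdeg g hgm rfl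
      exact ⟨s, q1 * m, hsm, hq1m.mul hmm, hss, by rw [hg, hgsm]; ring⟩

end FieldSide

noncomputable def coeffEquivAux (R : Type*) [Semiring R] [Nontrivial R] (n : ℕ) :
    {f : R[X] // f.Monic ∧ f.natDegree = n} ≃ (Fin n → R) :=
  (monicEquivDegreeLT n).trans (degreeLTEquiv R n).toEquiv

lemma coeffEquivAux_apply (R : Type*) [Semiring R] [Nontrivial R] (n : ℕ)
    (x : {f : R[X] // f.Monic ∧ f.natDegree = n}) (i : Fin n) :
    coeffEquivAux R n x i = x.1.coeff i := by
  obtain ⟨f, hM, hd⟩ := x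
  show f.eraseLead.coeff i = f.coeff i
  rw [eraseLead_coeff, if_neg]
  intro h
  have := i.isLt
  omega

instance monicFiniteAux (R : Type*) [Semiring R] [Nontrivial R] [Finite R] (n : ℕ) :
    Finite {f : R[X] // f.Monic ∧ f.natDegree = n} :=
  Finite.of_equiv _ (coeffEquivAux R n).symm

instance sfFiniteAux (R : Type*) [Semiring R] [Nontrivial R] [Finite R] (n : ℕ) :
    Finite {f : R[X] // f.Monic ∧ f.natDegree = n ∧ Squarefree f} :=
  Finite.of_injective (fun f => (⟨f.1, f.2.1, f.2.2.1⟩ : {f : R[X] // f.Monic ∧ f.natDegree = n}))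
    (fun a b h => by cases a; cases b; simpa [Subtype.ext_iff] using h)

lemma card_monic_aux (p : ℕ) [Fact p.Prime] (n : ℕ) :
    Nat.card {f : (ZMod p)[X] // f.Monic ∧ f.natDegree = n} = p ^ n := by
  rw [Nat.card_congr (coeffEquivAux (ZMod p) n)]
  simp [Nat.card_eq_fintype_card, ZMod.card]

noncomputable def sfcAux (p n : ℕ) : ℕ :=
  Nat.card {f : (ZMod p)[X] // f.Monic ∧ f.natDegree = n ∧ Squarefree f}

lemma key_identity_aux (p : ℕ) [Fact p.Prime] (n : ℕ) :
    ∑ b ∈ Finset.range (n / 2 + 1), sfcAux p (n - 2 * b) * p ^ b = p ^ n := by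
  classical
  set F := ZMod p
  let Sig := Σ b : Fin (n / 2 + 1),
    {s : F[X] // s.Monic ∧ s.natDegree = n - 2 * (b : ℕ) ∧ Squarefree s} ×
    {m : F[X] // m.Monic ∧ m.natDegree = (b : ℕ)}
  have hb2 : ∀ b : Fin (n / 2 + 1), 2 * (b : ℕ) ≤ n := by
    intro b
    have := b.isLt
    omega
  let Φ : Sig → {f : F[X] // f.Monic ∧ f.natDegree = n} := fun x =>
    ⟨x.2.1.1 * x.2.2.1 ^ 2, x.2.1.2.1.mul (x.2.2.2.1.pow 2), by
      obtain ⟨b, s, m⟩ := x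
      have hs := s.2 ; have hm := m.2
      rw [natDegree_mul hs.1.ne_zero (pow_ne_zero 2 hm.1.ne_zero), natDegree_pow, hs.2.1, hm.2]
      have := hb2 b
      omega⟩
  have hbij : Function.Bijective Φ := by
    constructor
    · rintro ⟨b, s, m⟩ ⟨b', s', m'⟩ h
      simp only [Φ, Subtype.ext_iff] at h
      obtain ⟨hse, hme⟩ := sq_decomp_unique' m.1.natDegree m.1 s.1 s'.1 m'.1 rfl
        s.2.1 m.2.1 s'.2.1 m'.2.1 s.2.2.2 s'.2.2.2 h
      have hbb : b = b' := by
        have h1 := m.2.2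
        have h2 := m'.2.2
        exact Fin.ext (by rw [← h1, ← h2, hme])
      subst hbb
      have h1 : s = s' := Subtype.ext hse
      have h2 : m = m' := Subtype.ext hme
      rw [h1, h2]
    · rintro ⟨f, hfM, hfd⟩
      obtain ⟨s, m, hsM, hmM, hsf, hfeq⟩ := exists_sq_decomp' f.natDegree f hfM rfl
      have hdeg : n = s.natDegree + 2 * m.natDegree := by
        have h1 : (s * m ^ 2).natDegree = s.natDegree + 2 * m.natDegree := by
          rw [natDegree_mul hsM.ne_zero (pow_ne_zero 2 hmM.ne_zero), natDegree_pow]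
        rw [← hfd, hfeq, h1]
      have hmle : m.natDegree < n / 2 + 1 := by omega
      refine ⟨⟨⟨m.natDegree, hmle⟩, ⟨s, hsM, by simp only [Fin.val_mk]; omega, hsf⟩,
        ⟨m, hmM, rfl⟩⟩, ?_⟩
      simp only [Φ, Subtype.ext_iff]
      exact hfeq.symm
  have hcard : Nat.card Sig = Nat.card {f : F[X] // f.Monic ∧ f.natDegree = n} :=
    Nat.card_congr (Equiv.ofBijective Φ hbij)
  rw [card_monic_aux p n] at hcard
  rw [← hcard]
  haveI : ∀ b : Fin (n/2+1),
      Fintype ({s : F[X] // s.Monic ∧ s.natDegree = n - 2 * (b:ℕ) ∧ Squarefree s} ×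
      {m : F[X] // m.Monic ∧ m.natDegree = (b:ℕ)}) := fun b => Fintype.ofFinite _
  rw [Nat.card_eq_fintype_card, Fintype.card_sigma]
  rw [Finset.sum_range fun b => sfcAux p (n - 2 * b) * p ^ b]
  refine Finset.sum_congr rfl fun b _ => ?_
  rw [← Nat.card_eq_fintype_card, Nat.card_prod, sfcAux, ← card_monic_aux p (b : ℕ)]

lemma sfcAux_eq (p : ℕ) [Fact p.Prime] {n : ℕ} (hn : 2 ≤ n) :
    sfcAux p n = p ^ (n - 1) * (p - 1) := by
  obtain ⟨m, rfl⟩ : ∃ m, n = m + 2 := ⟨n - 2, by omega⟩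
  have key2 := key_identity_aux p (m + 2)
  have key0 := key_identity_aux p m
  have hdiv : (m + 2) / 2 + 1 = (m / 2 + 1) + 1 := by omega
  rw [hdiv, Finset.sum_range_succ'] at key2
  have hsum : ∑ i ∈ Finset.range (m / 2 + 1), sfcAux p (m + 2 - 2 * (i + 1)) * p ^ (i + 1)
      = p * ∑ i ∈ Finset.range (m / 2 + 1), sfcAux p (m - 2 * i) * p ^ i := by
    rw [Finset.mul_sum]
    refine Finset.sum_congr rfl fun i _ => ?_
    have h : m + 2 - 2 * (i + 1) = m - 2 * i := by omega
    rw [h, pow_succ]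
    ring
  rw [hsum, key0] at key2
  have h1 : m + 2 - 2 * 0 = m + 2 := by omega
  rw [h1, pow_zero, mul_one] at key2
  have hp : 1 ≤ p := (Fact.out : p.Prime).one_le
  have h2 : p ^ (m + 2) = p ^ (m + 1) * p := by rw [pow_succ]
  have h3 : p * p ^ m = p ^ (m + 1) := by rw [pow_succ]; ring
  have h4 : p ^ (m + 2 - 1) = p ^ (m + 1) := by norm_num
  rw [h4, Nat.mul_sub, mul_one]
  omega

lemma nilpotent_of_castHom_eq_zero_aux (p k : ℕ) (hp : p.Prime) (hk : 1 ≤ k)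
    (c : ZMod (p ^ k)) (hc : ZMod.castHom (dvd_pow_self p (by omega : k ≠ 0)) (ZMod p) c = 0) :
    IsNilpotent c := by
  haveI : Fact p.Prime := ⟨hp⟩
  haveI : NeZero (p ^ k) := ⟨pow_ne_zero k hp.ne_zero⟩
  have h1 : ((c.val : ℕ) : ZMod p) = 0 := by
    rw [ZMod.castHom_apply, ← ZMod.natCast_val] at hc
    exact hc
  have h2 : p ∣ c.val := (ZMod.natCast_eq_zero_iff _ _).mp h1
  obtain ⟨t, ht⟩ := h2
  refine ⟨k, ?_⟩
  have h3 : c = ((p * t : ℕ) : ZMod (p ^ k)) := by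
    rw [← ht, ZMod.natCast_val, ZMod.cast_id]
  rw [h3]
  push_cast
  rw [mul_pow, ← Nat.cast_pow, ZMod.natCast_self, zero_mul]

lemma separable_iff_squarefree_map_aux (p k : ℕ) (hp : p.Prime) (hk : 1 ≤ k)
    (f : (ZMod (p ^ k))[X]) :
    f.Separable ↔
      Squarefree (f.map (ZMod.castHom (dvd_pow_self p (by omega : k ≠ 0)) (ZMod p))) := by
  haveI : Fact p.Prime := ⟨hp⟩
  set φ := ZMod.castHom (dvd_pow_self p (by omega : k ≠ 0)) (ZMod p) with hφ
  constructor
  · intro h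
    exact PerfectField.separable_iff_squarefree.mp (h.map)
  · intro h
    have hsep : (f.map φ).Separable := PerfectField.separable_iff_squarefree.mpr h
    obtain ⟨a, b, hab⟩ := hsep
    have hsurj : Function.Surjective φ := ZMod.ringHom_surjective φ
    obtain ⟨A, hA⟩ := Polynomial.map_surjective φ hsurj a
    obtain ⟨B, hB⟩ := Polynomial.map_surjective φ hsurj b
    set e : (ZMod (p ^ k))[X] := A * f + B * derivative f - 1 with he
    have hmape : e.map φ = 0 := by
      rw [he]
      simp only [Polynomial.map_sub, Polynomial.map_add, Polynomial.map_mul, Polynomial.map_one,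
        hA, hB, derivative_map]
      rw [sub_eq_zero, ← derivative_map]
      exact hab
    have hnil : IsNilpotent e := by
      rw [Polynomial.isNilpotent_iff]
      intro i
      apply nilpotent_of_castHom_eq_zero_aux p k hp hk
      have := congrArg (fun g => Polynomial.coeff g i) hmape
      simp only [coeff_map, coeff_zero] at this
      exact this
    have hu : IsUnit (1 + e) := hnil.isUnit_one_add
    obtain ⟨u, hu'⟩ := hu
    refine ⟨(↑u⁻¹ : (ZMod (p^k))[X]) * A, (↑u⁻¹ : (ZMod (p^k))[X]) * B, ?_⟩
    have h1 : A * f + B * derivative f = 1 + e := by rw [he]; ring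
    have h2 : (↑u⁻¹ : (ZMod (p^k))[X]) * (1 + e) = 1 := by
      rw [← hu']
      exact u.inv_mul
    calc (↑u⁻¹ : (ZMod (p^k))[X]) * A * f + (↑u⁻¹ : (ZMod (p^k))[X]) * B * derivative f
        = (↑u⁻¹ : (ZMod (p^k))[X]) * (A * f + B * derivative f) := by ring
      _ = 1 := by rw [h1, h2]

noncomputable def zmodSplitAux (p k : ℕ) (hp : p.Prime) (hk : 1 ≤ k) :
    ZMod (p ^ k) ≃ ZMod p × Fin (p ^ (k - 1)) where
  toFun x := (ZMod.castHom (dvd_pow_self p (by omega : k ≠ 0)) (ZMod p) x,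
    ⟨x.val / p, by
      haveI : NeZero (p ^ k) := ⟨pow_ne_zero k hp.ne_zero⟩
      have h1 : x.val < p ^ k := ZMod.val_lt x
      have h2 : p ^ k = p * p ^ (k - 1) := by
        conv_lhs => rw [show k = 1 + (k - 1) by omega, pow_add, pow_one]
      rw [Nat.div_lt_iff_lt_mul hp.pos, mul_comm]
      omega⟩)
  invFun rt := ((rt.2.val * p + rt.1.val : ℕ) : ZMod (p ^ k))
  left_inv x := by
    haveI : NeZero (p ^ k) := ⟨pow_ne_zero k hp.ne_zero⟩
    haveI : Fact p.Prime := ⟨hp⟩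
    simp only [ZMod.castHom_apply, ← ZMod.natCast_val, ZMod.val_natCast]
    have : x.val / p * p + x.val % p = x.val := Nat.div_add_mod' x.val p
    rw [this, ZMod.natCast_val, ZMod.cast_id]
  right_inv rt := by
    obtain ⟨r, t⟩ := rt
    haveI : NeZero (p ^ k) := ⟨pow_ne_zero k hp.ne_zero⟩
    haveI : Fact p.Prime := ⟨hp⟩
    have hrv : r.val < p := ZMod.val_lt r
    have ht : t.val < p ^ (k - 1) := t.isLt
    have h2 : p ^ k = p * p ^ (k - 1) := by
      conv_lhs => rw [show k = 1 + (k - 1) by omega, pow_add, pow_one]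
    have hlt : t.val * p + r.val < p ^ k := by nlinarith [hp.pos]
    have hval : ((t.val * p + r.val : ℕ) : ZMod (p ^ k)).val = t.val * p + r.val := by
      rw [ZMod.val_natCast, Nat.mod_eq_of_lt hlt]
    refine Prod.ext ?_ ?_
    · show ZMod.castHom _ (ZMod p) _ = r
      rw [map_natCast]
      push_cast
      rw [ZMod.natCast_self, mul_zero, zero_add, ZMod.natCast_val, ZMod.cast_id]
    · show (⟨_ / p, _⟩ : Fin _) = t
      apply Fin.ext
      show ((t.val * p + r.val : ℕ) : ZMod (p ^ k)).val / p = t.val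
      rw [hval, mul_comm (t.val) p, Nat.mul_add_div hp.pos, Nat.div_eq_of_lt hrv, add_zero]

lemma zmodSplitAux_fst (p k : ℕ) (hp : p.Prime) (hk : 1 ≤ k) (x : ZMod (p ^ k)) :
    (zmodSplitAux p k hp hk x).1
      = ZMod.castHom (dvd_pow_self p (by omega : k ≠ 0)) (ZMod p) x := rfl

lemma exp_arith_aux {k d : ℕ} (hk : 1 ≤ k) (hd : 2 ≤ d) :
    d - 1 + (k - 1) * d = k * d - 1 := by
  obtain ⟨k', rfl⟩ : ∃ k', k = k' + 1 := ⟨k - 1, by omega⟩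
  obtain ⟨d', rfl⟩ : ∃ d', d = d' + 2 := ⟨d - 2, by omega⟩
  have h2 : (k' + 1) * (d' + 2) = k' * (d' + 2) + (d' + 2) := by ring
  simp only [Nat.add_sub_cancel]
  omega

def regroupAux {α : Type*} {A B C : α → Prop} :
    {f : α // A f ∧ B f ∧ C f} ≃ {x : {f : α // A f ∧ B f} // C x.1} where
  toFun f := ⟨⟨f.1, f.2.1, f.2.2.1⟩, f.2.2.2⟩
  invFun x := ⟨x.1.1, x.1.2.1, x.1.2.2, x.2⟩
  left_inv _ := rfl
  right_inv _ := rfl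

/-- The number of monic separable polynomials of degree `d ≥ 2` over `ℤ/p^k`
is `p^(kd-1)(p-1) = φ(p^(kd))`. -/
theorem count_monic_separable_zmod_prime_pow (p k d : ℕ) (hp : p.Prime) (hk : 1 ≤ k)
    (hd : 2 ≤ d) :
    Nat.card {f : (ZMod (p ^ k))[X] | f.Monic ∧ f.natDegree = d ∧ f.Separable}
        = p ^ (k * d - 1) * (p - 1) ∧
      p ^ (k * d - 1) * (p - 1) = Nat.totient (p ^ (k * d)) := by
  haveI : Fact p.Prime := ⟨hp⟩
  haveI : Fact (1 < p ^ k) :=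
    ⟨lt_of_lt_of_le hp.one_lt (Nat.le_self_pow (by omega) p)⟩
  set R := ZMod (p ^ k)
  set φ := ZMod.castHom (dvd_pow_self p (by omega : k ≠ 0)) (ZMod p) with hφ
  set K := p ^ (k - 1)
  set e0 := zmodSplitAux p k hp hk
  set P : (Fin d → ZMod p) → Prop :=
    fun w => Squarefree ((coeffEquivAux (ZMod p) d).symm w : (ZMod p)[X]) with hP
  constructor
  · -- counting
    have hE1 : Nat.card {f : R[X] | f.Monic ∧ f.natDegree = d ∧ f.Separable}
        = Nat.card {x : {f : R[X] // f.Monic ∧ f.natDegree = d} // x.1.Separable} :=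
      Nat.card_congr regroupAux
    have hcond : ∀ x : {f : R[X] // f.Monic ∧ f.natDegree = d},
        x.1.Separable ↔ P (fun i => (e0 (coeffEquivAux R d x i)).1) := by
      intro x
      rw [separable_iff_squarefree_map_aux p k hp hk]
      have hmap : (x.1.map φ).Monic := x.2.1.map φ
      have hdeg : (x.1.map φ).natDegree = d := by
        rw [x.2.1.natDegree_map, x.2.2]
      have hfun : (fun i => (e0 (coeffEquivAux R d x i)).1)
          = coeffEquivAux (ZMod p) d ⟨x.1.map φ, hmap, hdeg⟩ := by
        funext i
        rw [zmodSplitAux_fst, coeffEquivAux_apply, coeffEquivAux_apply, coeff_map]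
      rw [hfun, hP]
      simp only [Equiv.symm_apply_apply]
      exact Iff.rfl
    have hE2 : Nat.card {x : {f : R[X] // f.Monic ∧ f.natDegree = d} // x.1.Separable}
        = Nat.card {v : Fin d → R // P (fun i => (e0 (v i)).1)} :=
      Nat.card_congr ((coeffEquivAux R d).subtypeEquiv hcond)
    have hE3 : Nat.card {v : Fin d → R // P (fun i => (e0 (v i)).1)}
        = Nat.card {w : Fin d → ZMod p × Fin K // P (fun i => (w i).1)} :=
      Nat.card_congr ((Equiv.piCongrRight fun _ => e0).subtypeEquiv fun v => Iff.rfl)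
    have hE4 : Nat.card {w : Fin d → ZMod p × Fin K // P (fun i => (w i).1)}
        = Nat.card {u : (Fin d → ZMod p) × (Fin d → Fin K) // P u.1} :=
      Nat.card_congr ((Equiv.arrowProdEquivProdArrow (Fin d) (fun _ => ZMod p) (fun _ => Fin K)).subtypeEquiv
        fun w => Iff.rfl)
    have hE5 : Nat.card {u : (Fin d → ZMod p) × (Fin d → Fin K) // P u.1}
        = Nat.card ({w : Fin d → ZMod p // P w} × (Fin d → Fin K)) :=
      Nat.card_congr Equiv.prodSubtypeFstEquivSubtypeProd
    have hsf : Nat.card {w : Fin d → ZMod p // P w} = sfcAux p d := by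
      rw [sfcAux]
      refine (Nat.card_congr ?_).symm
      refine (regroupAux).trans ?_
      refine (coeffEquivAux (ZMod p) d).subtypeEquiv fun g => ?_
      rw [hP]
      simp only [Equiv.symm_apply_apply]
    rw [hE1, hE2, hE3, hE4, hE5, Nat.card_prod, hsf, sfcAux_eq p hd]
    have hKcard : Nat.card (Fin d → Fin K) = K ^ d := by
      simp [Nat.card_eq_fintype_card]
    rw [hKcard]
    have hexp : p ^ (d - 1) * (p - 1) * (p ^ (k - 1)) ^ d = p ^ (k * d - 1) * (p - 1) := by
      rw [← pow_mul]
      have h1 : d - 1 + (k - 1) * d = k * d - 1 := exp_arith_aux hk hd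
      calc p ^ (d - 1) * (p - 1) * p ^ ((k - 1) * d)
          = p ^ (d - 1 + (k - 1) * d) * (p - 1) := by rw [pow_add]; ring
        _ = p ^ (k * d - 1) * (p - 1) := by rw [h1]
    exact hexp
  · -- totient
    rw [Nat.totient_prime_pow hp (by positivity : 0 < k * d)]
end

section
/- For n > 1 with prime factorization n = p_1^{k_1} ⋯ p_m^{k_m}, the number of monic separable polynomials of degree d ≥ 2 in (ℤ/n)[x] is φ(n^d) = φ(n)·n^{d-1}, where φ is Euler's totient function. -/
open Polynomial

section MkPoly
variable {R : Type*} [CommRing R]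

noncomputable def mkPoly (d : ℕ) (a : Fin d → R) : R[X] :=
  X ^ d + ∑ i : Fin d, C (a i) * X ^ (i : ℕ)

lemma mkPoly_sum_coeff (d : ℕ) (a : Fin d → R) (k : ℕ) :
    (∑ i : Fin d, C (a i) * X ^ (i : ℕ)).coeff k = if h : k < d then a ⟨k, h⟩ else 0 := by
  rw [finset_sum_coeff]
  simp only [coeff_C_mul, coeff_X_pow]
  split
  · next h =>
    rw [Finset.sum_eq_single (⟨k, h⟩ : Fin d)]
    · simp
    · intro i _ hi
      have : k ≠ (i : ℕ) := fun he => hi (Fin.ext he.symm)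
      simp [this]
    · simp
  · next h =>
    apply Finset.sum_eq_zero
    intro i _
    have hik : k ≠ (i : ℕ) := by have := i.2; omega
    simp [hik]

lemma mkPoly_coeff (d : ℕ) (a : Fin d → R) (k : ℕ) :
    (mkPoly d a).coeff k = (if k = d then 1 else 0) + (if h : k < d then a ⟨k, h⟩ else 0) := by
  rw [mkPoly, coeff_add, coeff_X_pow, mkPoly_sum_coeff]

lemma mkPoly_coeff_lt (d : ℕ) (a : Fin d → R) (i : Fin d) : (mkPoly d a).coeff i = a i := by
  have h2 : (i : ℕ) ≠ d := by have := i.2; omega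
  rw [mkPoly_coeff, dif_pos i.2, if_neg h2, zero_add]

lemma mkPoly_coeff_self (d : ℕ) (a : Fin d → R) : (mkPoly d a).coeff d = 1 := by
  rw [mkPoly_coeff, if_pos rfl, dif_neg (lt_irrefl d), add_zero]

lemma mkPoly_coeff_gt (d : ℕ) (a : Fin d → R) {k : ℕ} (hk : d < k) : (mkPoly d a).coeff k = 0 := by
  rw [mkPoly_coeff, if_neg (by omega), dif_neg (by omega), add_zero]

lemma mkPoly_eq_self {d : ℕ} {f : R[X]} (hf : f.Monic) (hd : f.natDegree = d) :
    mkPoly d (fun i => f.coeff i) = f := by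
  ext k
  rcases lt_trichotomy k d with h | h | h
  · exact mkPoly_coeff_lt d _ ⟨k, h⟩
  · subst h; rw [mkPoly_coeff_self, ← hd]; exact (hf.coeff_natDegree).symm
  · rw [mkPoly_coeff_gt d _ h, coeff_eq_zero_of_natDegree_lt (hd ▸ h)]

lemma mkPoly_map {S : Type*} [CommRing S] (φ : R →+* S) (d : ℕ) (a : Fin d → R) :
    (mkPoly d a).map φ = mkPoly d (fun i => φ (a i)) := by
  simp [mkPoly, Polynomial.map_add, Polynomial.map_pow, Polynomial.map_sum, Polynomial.map_mul,
    Polynomial.map_C, Polynomial.map_X]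

variable [Nontrivial R]

lemma mkPoly_degree_sum_lt (d : ℕ) (a : Fin d → R) :
    (∑ i : Fin d, C (a i) * X ^ (i : ℕ)).degree < (d : WithBot ℕ) := by
  apply lt_of_le_of_lt (degree_sum_le _ _)
  rw [Finset.sup_lt_iff (by exact_mod_cast WithBot.bot_lt_coe d)]
  intro i _
  apply lt_of_le_of_lt (degree_C_mul_X_pow_le _ _)
  exact_mod_cast i.2

lemma mkPoly_monic (d : ℕ) (a : Fin d → R) : (mkPoly d a).Monic :=
  (monic_X_pow d).add_of_left (by rw [degree_X_pow]; exact mkPoly_degree_sum_lt d a)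

lemma mkPoly_natDegree (d : ℕ) (a : Fin d → R) : (mkPoly d a).natDegree = d := by
  have : (mkPoly d a).degree = d := by
    rw [mkPoly, degree_add_eq_left_of_degree_lt, degree_X_pow]
    rw [degree_X_pow]; exact mkPoly_degree_sum_lt d a
  exact natDegree_eq_of_degree_eq_some this

/-- Parametrization of monic polynomials of degree `d` satisfying a predicate `P`. -/
noncomputable def predEquiv (d : ℕ) (P : R[X] → Prop) :
    {a : Fin d → R // P (mkPoly d a)} ≃ {f : R[X] // f.Monic ∧ f.natDegree = d ∧ P f} where
  toFun a := ⟨mkPoly d a.1, mkPoly_monic d a.1, mkPoly_natDegree d a.1, a.2⟩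
  invFun f := ⟨fun i => f.1.coeff i, by
    rw [mkPoly_eq_self f.2.1 f.2.2.1]; exact f.2.2.2⟩
  left_inv a := by
    apply Subtype.ext; funext i; exact mkPoly_coeff_lt d a.1 i
  right_inv f := Subtype.ext (mkPoly_eq_self f.2.1 f.2.2.1)

lemma finite_pred [Finite R] (d : ℕ) (P : R[X] → Prop) :
    Finite {f : R[X] // f.Monic ∧ f.natDegree = d ∧ P f} :=
  Finite.of_equiv _ (predEquiv d P)

lemma card_pred [Finite R] (d : ℕ) (P : R[X] → Prop) :
    Nat.card {f : R[X] // f.Monic ∧ f.natDegree = d ∧ P f}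
      = Nat.card {a : Fin d → R // P (mkPoly d a)} :=
  (Nat.card_congr (predEquiv d P)).symm

lemma card_monic [Finite R] (d : ℕ) :
    Nat.card {f : R[X] // f.Monic ∧ f.natDegree = d} = Nat.card R ^ d := by
  have e : {f : R[X] // f.Monic ∧ f.natDegree = d ∧ True} ≃ {f : R[X] // f.Monic ∧ f.natDegree = d} :=
    Equiv.subtypeEquivRight (by tauto)
  rw [← Nat.card_congr e, card_pred d (fun _ => True),
    Nat.card_congr (Equiv.subtypeUnivEquiv (fun _ => trivial))]
  simp [Nat.card_pi]

end MkPoly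

open Polynomial UniqueFactorizationMonoid

section FieldDecomp
variable {F : Type*} [Field F] [DecidableEq F]

lemma exists_decomp (N : ℕ) : ∀ f : F[X], f.natDegree ≤ N → f.Monic →
    ∃ g h : F[X], g.Monic ∧ Squarefree g ∧ h.Monic ∧ f = g * h ^ 2 := by
  induction N using Nat.strong_induction_on with
  | _ N ih =>
    intro f hN hf
    by_cases hsq : Squarefree f
    · exact ⟨f, 1, hf, hsq, monic_one, by ring⟩
    · rw [Squarefree] at hsq; push_neg at hsq
      obtain ⟨x, hxdvd, hxu⟩ := hsq
      have hx0 : x ≠ 0 := by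
        rintro rfl
        rw [mul_zero] at hxdvd
        exact hf.ne_zero (eq_zero_of_zero_dvd hxdvd)
      obtain ⟨π, hπirr, hπdvd⟩ := WfDvdMonoid.exists_irreducible_factor hxu hx0
      have hpirr : Irreducible (normalize π) := (normalize_associated π).symm.irreducible hπirr
      have hpmonic : (normalize π).Monic := monic_normalize hπirr.ne_zero
      have hpdvd2 : normalize π ^ 2 ∣ f := by
        have h1 : π ^ 2 ∣ f := (pow_dvd_pow_of_dvd hπdvd 2).trans (by rwa [← sq] at hxdvd)
        have h2 : Associated (normalize π ^ 2) (π ^ 2) :=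
          (Associated.pow_pow (normalize_associated π))
        exact h2.dvd.trans h1
      obtain ⟨c, hc⟩ := hpdvd2
      have hcmonic : c.Monic := (hpmonic.pow 2).of_mul_monic_left (hc ▸ hf)
      have hdegf : f.natDegree = 2 * (normalize π).natDegree + c.natDegree := by
        rw [hc, (hpmonic.pow 2).natDegree_mul hcmonic, natDegree_pow]
      have hπpos : 0 < (normalize π).natDegree := hpirr.natDegree_pos
      obtain ⟨g, h, hg, hsg, hh, hgh⟩ := ih c.natDegree (by omega) c le_rfl hcmonic
      exact ⟨g, normalize π * h, hg, hsg, hpmonic.mul hh, by rw [hc, hgh]; ring⟩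

lemma unique_decomp {g₁ g₂ h₁ h₂ : F[X]} (hg₁ : g₁.Monic) (hs₁ : Squarefree g₁)
    (hh₁ : h₁.Monic) (hg₂ : g₂.Monic) (hs₂ : Squarefree g₂) (hh₂ : h₂.Monic)
    (heq : g₁ * h₁ ^ 2 = g₂ * h₂ ^ 2) : g₁ = g₂ ∧ h₁ = h₂ := by
  have hkey : h₁ = h₂ := by
    apply eq_of_monic_of_associated hh₁ hh₂
    rw [associated_iff_normalizedFactors_eq_normalizedFactors hh₁.ne_zero hh₂.ne_zero]
    have e1 := congrArg normalizedFactors heq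
    rw [normalizedFactors_mul hg₁.ne_zero (pow_ne_zero 2 hh₁.ne_zero),
        normalizedFactors_mul hg₂.ne_zero (pow_ne_zero 2 hh₂.ne_zero),
        normalizedFactors_pow, normalizedFactors_pow] at e1
    have n1 := (squarefree_iff_nodup_normalizedFactors hg₁.ne_zero).mp hs₁
    have n2 := (squarefree_iff_nodup_normalizedFactors hg₂.ne_zero).mp hs₂
    rw [Multiset.ext]
    intro π
    have hc := congrArg (Multiset.count π) e1
    rw [Multiset.count_add, Multiset.count_add, Multiset.count_nsmul, Multiset.count_nsmul] at hc
    have c1 : Multiset.count π (normalizedFactors g₁) ≤ 1 :=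
      Multiset.nodup_iff_count_le_one.mp n1 π
    have c2 : Multiset.count π (normalizedFactors g₂) ≤ 1 :=
      Multiset.nodup_iff_count_le_one.mp n2 π
    omega
  subst hkey
  exact ⟨mul_right_cancel₀ (pow_ne_zero 2 hh₁.ne_zero) heq, rfl⟩

end FieldDecomp

open Polynomial UniqueFactorizationMonoid

lemma my_card_sigma {ι : Type*} [Fintype ι] (f : ι → Type*) [∀ i, Finite (f i)] :
    Nat.card (Σ i, f i) = ∑ i, Nat.card (f i) := by
  letI := fun i => Fintype.ofFinite (f i)
  simp [Nat.card_eq_fintype_card, Fintype.card_sigma]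

section FieldCount
variable (F : Type*) [Field F] [DecidableEq F] [Finite F]

/-- Number of monic squarefree polynomials of degree `e`. -/
noncomputable def Scard (e : ℕ) : ℕ :=
  Nat.card {f : F[X] // f.Monic ∧ f.natDegree = e ∧ Squarefree f}

/-- The main bijection: monic degree-e polys ≃ pairs (squarefree, square part). -/
noncomputable def decompEquiv (e : ℕ) :
    (Σ j : Fin (e / 2 + 1),
        {g : F[X] // g.Monic ∧ g.natDegree = e - 2 * (j : ℕ) ∧ Squarefree g} ×
        {h : F[X] // h.Monic ∧ h.natDegree = (j : ℕ)}) ≃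
      {f : F[X] // f.Monic ∧ f.natDegree = e} := by
  apply Equiv.ofBijective (f := fun x =>
    ⟨x.2.1.1 * x.2.2.1 ^ 2, x.2.1.2.1.mul (x.2.2.2.1.pow 2), by
      have hj : 2 * (x.1 : ℕ) ≤ e := by
        have h1 := x.1.2
        have h2 : (x.1 : ℕ) ≤ e / 2 := by omega
        calc 2 * (x.1 : ℕ) ≤ 2 * (e / 2) := by omega
        _ ≤ e := Nat.mul_div_le e 2
      rw [x.2.1.2.1.natDegree_mul (x.2.2.2.1.pow 2), natDegree_pow, x.2.1.2.2.1, x.2.2.2.2]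
      omega⟩)
  constructor
  · rintro ⟨⟨j₁, hj₁⟩, ⟨g₁, hmg₁, hdg₁, hsg₁⟩, ⟨h₁, hmh₁, hdh₁⟩⟩
      ⟨⟨j₂, hj₂⟩, ⟨g₂, hmg₂, hdg₂, hsg₂⟩, ⟨h₂, hmh₂, hdh₂⟩⟩ hE
    simp only [Subtype.mk.injEq] at hE
    obtain ⟨hge, hhe⟩ := unique_decomp hmg₁ hsg₁ hmh₁ hmg₂ hsg₂ hmh₂ hE
    subst hge; subst hhe
    have hje : j₁ = j₂ := by
      have := hdh₁.symm.trans hdh₂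
      simpa using this
    subst hje
    rfl
  · rintro ⟨f, hf, hdeg⟩
    obtain ⟨g, h, hg, hsg, hh, hgh⟩ := exists_decomp f.natDegree f le_rfl hf
    have hdegf : f.natDegree = g.natDegree + 2 * h.natDegree := by
      rw [hgh, hg.natDegree_mul (hh.pow 2), natDegree_pow]
    have hle : h.natDegree ≤ e / 2 := (Nat.le_div_iff_mul_le (by norm_num)).mpr (by omega)
    have hj : h.natDegree < e / 2 + 1 := by omega
    refine ⟨⟨⟨h.natDegree, hj⟩, ⟨g, hg, ?_, hsg⟩, ⟨h, hh, rfl⟩⟩, Subtype.ext hgh.symm⟩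
    simp only [Fin.val_mk]
    omega

lemma card_monic_eq_sum (e : ℕ) :
    Nat.card F ^ e = ∑ j ∈ Finset.range (e / 2 + 1), Scard F (e - 2 * j) * Nat.card F ^ j := by
  haveI h1 : ∀ (d : ℕ) (P : F[X] → Prop), Finite {f : F[X] // f.Monic ∧ f.natDegree = d ∧ P f} :=
    fun d P => finite_pred d P
  haveI h2 : ∀ (d : ℕ), Finite {f : F[X] // f.Monic ∧ f.natDegree = d} := fun d =>
    Finite.of_equiv _ (Equiv.subtypeEquivRight
      (p := fun f : F[X] => f.Monic ∧ f.natDegree = d ∧ True) (by tauto))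
  rw [← card_monic e, ← Nat.card_congr (decompEquiv F e), my_card_sigma]
  rw [Finset.sum_range]
  congr 1; funext j
  rw [Nat.card_prod, card_monic]
  rfl

lemma Scard_zero : Scard F 0 = 1 := by
  haveI h1 : ∀ (d : ℕ) (P : F[X] → Prop), Finite {f : F[X] // f.Monic ∧ f.natDegree = d ∧ P f} :=
    fun d P => finite_pred d P
  have h := card_monic_eq_sum F 0
  simp [Finset.sum_range_one] at h
  omega

lemma Scard_one : Scard F 1 = Nat.card F := by
  have h := card_monic_eq_sum F 1
  simp [Finset.sum_range_one] at h
  omega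

lemma Scard_add (e : ℕ) (he : 2 ≤ e) :
    Scard F e + Nat.card F ^ (e - 1) = Nat.card F ^ e := by
  have h := card_monic_eq_sum F e
  rw [Finset.sum_range_succ'] at h
  have he2 : e / 2 = (e - 2) / 2 + 1 := by omega
  have hsum : ∑ j ∈ Finset.range (e / 2), Scard F (e - 2 * (j + 1)) * Nat.card F ^ (j + 1)
      = Nat.card F * Nat.card F ^ (e - 2) := by
    have hterm : ∀ j : ℕ, Scard F (e - 2 * (j + 1)) * Nat.card F ^ (j + 1)
        = Nat.card F * (Scard F ((e - 2) - 2 * j) * Nat.card F ^ j) := by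
      intro j
      rw [show e - 2 * (j + 1) = (e - 2) - 2 * j by omega, pow_succ]
      ring
    simp_rw [hterm]
    rw [← Finset.mul_sum, he2, ← card_monic_eq_sum F (e - 2)]
  rw [hsum] at h
  simp only [Nat.mul_zero, Nat.sub_zero, pow_zero, mul_one] at h
  have hq : Nat.card F * Nat.card F ^ (e - 2) = Nat.card F ^ (e - 1) := by
    rw [show e - 1 = (e - 2) + 1 by omega, pow_succ]
    ring
  omega
end FieldCount

open Polynomial

lemma separable_iff_forall_prime (n : ℕ) (hn : 1 < n) (f : (ZMod n)[X]) :
    f.Separable ↔ ∀ p, ∀ hp : p ∈ n.primeFactors,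
      (f.map (ZMod.castHom (Nat.dvd_of_mem_primeFactors hp) (ZMod p))).Separable := by
  constructor
  · intro hsep p hp
    exact hsep.map
  · intro H
    have hnt : Nontrivial (ZMod n) := by
      haveI : Fact (1 < n) := ⟨hn⟩
      infer_instance
    set I : Ideal (ZMod n)[X] := Ideal.span {f, derivative f} with hI
    have hItop : I = ⊤ := by
      by_contra hne
      obtain ⟨m, hmax, hle⟩ := Ideal.exists_le_maximal I hne
      letI k := (ZMod n)[X] ⧸ m
      letI : Field k := Ideal.Quotient.field m
      have h0 : ((n : ℕ) : k) = 0 := by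
        rw [← map_natCast (Ideal.Quotient.mk m) n]
        have : ((n : ℕ) : (ZMod n)[X]) = 0 := by
          rw [← Polynomial.C_eq_natCast]
          simp [ZMod.natCast_self]
        rw [this, map_zero]
      have hdvd : ringChar k ∣ n := ringChar.dvd h0
      have hprime : (ringChar k).Prime := by
        rcases CharP.char_is_prime_or_zero k (ringChar k) with h | h
        · exact h
        · rw [h] at hdvd
          omega
      set p := ringChar k with hpdef
      have hp : p ∈ n.primeFactors := Nat.mem_primeFactors.mpr ⟨hprime, hdvd, by omega⟩
      haveI : CharP k p := ringChar.charP k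
      set φ := ZMod.castHom (Nat.dvd_of_mem_primeFactors hp) (ZMod p) with hφ
      set ψ : (ZMod p)[X] →+* k := eval₂RingHom (ZMod.castHom dvd_rfl k) (Ideal.Quotient.mk m X)
        with hψ
      have key : ∀ g : (ZMod n)[X], ψ (g.map φ) = Ideal.Quotient.mk m g := by
        have : ψ.comp (mapRingHom φ) = Ideal.Quotient.mk m := by
          apply ringHom_ext'
          · exact Subsingleton.elim _ _
          · simp [hψ]
        intro g
        exact RingHom.congr_fun this g
      obtain ⟨u, v, huv⟩ := H p hp
      have hfm : Ideal.Quotient.mk m f = 0 :=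
        Ideal.Quotient.eq_zero_iff_mem.mpr (hle (Ideal.subset_span (by simp)))
      have hfm' : Ideal.Quotient.mk m (derivative f) = 0 :=
        Ideal.Quotient.eq_zero_iff_mem.mpr (hle (Ideal.subset_span (by simp)))
      have := congrArg ψ huv
      rw [map_add, map_mul, map_mul, map_one, derivative_map, key, key, hfm, hfm',
        mul_zero, mul_zero, add_zero] at this
      exact one_ne_zero (α := k) this.symm
    have h1 : (1 : (ZMod n)[X]) ∈ I := hItop ▸ Submodule.mem_top
    rw [hI, Ideal.mem_span_pair] at h1
    obtain ⟨a, b, hab⟩ := h1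
    exact ⟨a, b, hab⟩

open Polynomial

lemma card_preimage_addHom {A B : Type*} [AddCommGroup A] [AddCommGroup B] [Finite A]
    (φ : A →+ B) (hφ : Function.Surjective ⇑φ) (T : Set B) :
    Nat.card (φ ⁻¹' T) = Nat.card T * Nat.card φ.ker := by
  haveI : Finite B := Finite.of_surjective _ hφ
  have e2 : ∀ t : B, {a : A // φ a = t} ≃ φ.ker := by
    intro t
    have ha₀ : φ ((hφ t).choose) = t := (hφ t).choose_spec
    set a₀ := (hφ t).choose
    refine ⟨fun x => ⟨x.1 - a₀, ?_⟩, fun y => ⟨y.1 + a₀, ?_⟩, fun x => ?_, fun y => ?_⟩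
    · rw [AddMonoidHom.mem_ker, map_sub, x.2, ha₀, sub_self]
    · have hy : φ y.1 = 0 := y.2
      rw [map_add, hy, ha₀, zero_add]
    · exact Subtype.ext (sub_add_cancel x.1 a₀)
    · exact Subtype.ext (add_sub_cancel_right y.1 a₀)
  have e3 : ∀ t : T, {x : ↥(φ ⁻¹' T) // (fun x : ↥(φ ⁻¹' T) => (⟨φ x.1, x.2⟩ : T)) x = t}
      ≃ {a : A // φ a = (t : B)} := by
    intro t
    refine ⟨fun x => ⟨x.1.1, congrArg Subtype.val x.2⟩,
      fun a => ⟨⟨a.1, by rw [Set.mem_preimage, a.2]; exact t.2⟩, Subtype.ext a.2⟩,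
      fun x => Subtype.ext (Subtype.ext rfl), fun a => rfl⟩
  have e1 : (φ ⁻¹' T) ≃ Σ t : T, {x : ↥(φ ⁻¹' T) // (fun x : ↥(φ ⁻¹' T) => (⟨φ x.1, x.2⟩ : T)) x = t} :=
    (Equiv.sigmaFiberEquiv _).symm
  letI : Fintype T := Fintype.ofFinite _
  letI : Fintype φ.ker := Fintype.ofFinite _
  rw [Nat.card_congr e1, my_card_sigma]
  have : ∀ t : T, Nat.card {x : ↥(φ ⁻¹' T) // (fun x : ↥(φ ⁻¹' T) => (⟨φ x.1, x.2⟩ : T)) x = t}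
      = Nat.card φ.ker :=
    fun t => Nat.card_congr ((e3 t).trans (e2 t))
  rw [Finset.sum_congr rfl (fun t _ => this t), Finset.sum_const, Finset.card_univ,
    smul_eq_mul, Nat.card_eq_fintype_card, Nat.card_eq_fintype_card]

lemma card_ker_addHom {A B : Type*} [AddCommGroup A] [AddCommGroup B] [Finite A]
    (φ : A →+ B) (hφ : Function.Surjective ⇑φ) :
    Nat.card A = Nat.card B * Nat.card φ.ker := by
  rw [AddSubgroup.card_eq_card_quotient_mul_card_addSubgroup φ.ker,
    Nat.card_congr (QuotientAddGroup.quotientKerEquivOfSurjective φ hφ).toEquiv]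

lemma zmod_castHom_surjective {m n : ℕ} (h : m ∣ n) [NeZero m] :
    Function.Surjective (ZMod.castHom h (ZMod m)) := by
  intro b
  refine ⟨((b.val : ℕ) : ZMod n), ?_⟩
  rw [map_natCast]
  exact ZMod.natCast_rightInverse b

lemma crt_surjective (n : ℕ) (hn : n ≠ 0) :
    Function.Surjective ⇑(Pi.ringHom fun p : n.primeFactors =>
      ZMod.castHom (Nat.dvd_of_mem_primeFactors p.2) (ZMod (p : ℕ))) := by
  have hcop : Pairwise (Function.onFun Nat.Coprime fun p : n.primeFactors => (p : ℕ)) := by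
    intro p q hpq
    exact (Nat.coprime_primes (Nat.prime_of_mem_primeFactors p.2)
      (Nat.prime_of_mem_primeFactors q.2)).mpr (fun h => hpq (Subtype.ext h))
  have hdvd : (∏ p : n.primeFactors, (p : ℕ)) ∣ n := by
    have he : (∏ p : n.primeFactors, (p : ℕ)) = ∏ p ∈ n.primeFactors, p :=
      by simpa using Finset.prod_coe_sort n.primeFactors (fun p => p)
    rw [he]
    exact Nat.prod_primeFactors_dvd n
  haveI : NeZero (∏ p : n.primeFactors, (p : ℕ)) := by
    constructor
    apply Finset.prod_ne_zero_iff.mpr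
    intro p _
    exact (Nat.prime_of_mem_primeFactors p.2).pos.ne'
  set Ψ : ZMod n →+* Π p : n.primeFactors, ZMod (p : ℕ) :=
    (ZMod.prodEquivPi _ hcop).toRingHom.comp
      (ZMod.castHom hdvd (ZMod (∏ p : n.primeFactors, (p : ℕ)))) with hΨ
  have hsurj : Function.Surjective ⇑Ψ :=
    (ZMod.prodEquivPi _ hcop).surjective.comp (zmod_castHom_surjective hdvd)
  have : (Pi.ringHom fun p : n.primeFactors =>
      ZMod.castHom (Nat.dvd_of_mem_primeFactors p.2) (ZMod (p : ℕ))) = Ψ :=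
    Subsingleton.elim _ _
  rw [this]
  exact hsurj

open Polynomial

lemma n_eq_prod_fact {n : ℕ} (hn : n ≠ 0) :
    ∏ p ∈ n.primeFactors, p ^ n.factorization p = n := by
  rw [← Nat.support_factorization]
  exact Nat.factorization_prod_pow_eq_self hn

lemma totient_pow_prod {n : ℕ} (hn : n ≠ 0) {m : ℕ} (hm : m ≠ 0) :
    Nat.totient (n ^ m) = ∏ p ∈ n.primeFactors, p ^ (m * n.factorization p - 1) * (p - 1) := by
  rw [Nat.totient_eq_prod_factorization (pow_ne_zero m hn), Nat.factorization_pow, Finsupp.prod,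
    Finsupp.support_smul_eq hm, Nat.support_factorization]
  apply Finset.prod_congr rfl
  intro p _
  rw [Finsupp.smul_apply, smul_eq_mul]

lemma pow_prod_fact {n : ℕ} (hn : n ≠ 0) (m : ℕ) :
    n ^ m = ∏ p ∈ n.primeFactors, p ^ (m * n.factorization p) := by
  conv_lhs => rw [← n_eq_prod_fact hn]
  rw [← Finset.prod_pow]
  apply Finset.prod_congr rfl
  intro p _
  rw [← pow_mul, mul_comm]

lemma totient_pow_eq (n d : ℕ) (hn : 1 < n) (hd : 1 ≤ d) :
    Nat.totient (n ^ d) = Nat.totient n * n ^ (d - 1) := by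
  have hn0 : n ≠ 0 := by omega
  have h1 : Nat.totient n = ∏ p ∈ n.primeFactors, p ^ (1 * n.factorization p - 1) * (p - 1) := by
    have := totient_pow_prod hn0 (m := 1) one_ne_zero
    rw [pow_one] at this
    exact this
  rw [totient_pow_prod hn0 (by omega : d ≠ 0), h1, pow_prod_fact hn0 (d - 1),
    ← Finset.prod_mul_distrib]
  apply Finset.prod_congr rfl
  intro p hp
  have hk : 1 ≤ n.factorization p :=
    Nat.Prime.factorization_pos_of_dvd (Nat.prime_of_mem_primeFactors hp) hn0
      (Nat.dvd_of_mem_primeFactors hp)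
  rw [show d * n.factorization p - 1
      = (1 * n.factorization p - 1) + ((d - 1) * n.factorization p) by
    cases d with
    | zero => omega
    | succ d' => rcases Nat.exists_eq_add_of_le hk with ⟨c, hc⟩; simp [hc]; ring_nf; omega]
  rw [pow_add]
  ring

open Polynomial

lemma Sp_eq (p d : ℕ) (hp : p.Prime) (hd : 2 ≤ d) :
    Nat.card {a : Fin d → ZMod p // (mkPoly d a).Separable} = p ^ (d - 1) * (p - 1) := by
  haveI : Fact p.Prime := ⟨hp⟩
  have e : {f : (ZMod p)[X] // f.Monic ∧ f.natDegree = d ∧ f.Separable}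
      ≃ {f : (ZMod p)[X] // f.Monic ∧ f.natDegree = d ∧ Squarefree f} :=
    Equiv.subtypeEquivRight (fun f => by
      rw [PerfectField.separable_iff_squarefree])
  have h1 : Nat.card {a : Fin d → ZMod p // (mkPoly d a).Separable} = Scard (ZMod p) d := by
    rw [← card_pred d (fun f : (ZMod p)[X] => f.Separable), Nat.card_congr e]
    rfl
  have h := Scard_add (ZMod p) d hd
  rw [Nat.card_zmod] at h
  have hd1 : p ^ d = p ^ (d - 1) * p := by
    rw [← pow_succ]
    congr 1
    omega
  have h2 : p ^ (d - 1) * (p - 1) + p ^ (d - 1) = p ^ (d - 1) * p := by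
    have hp1 : p - 1 + 1 = p := Nat.succ_pred_eq_of_pos hp.pos
    calc p ^ (d - 1) * (p - 1) + p ^ (d - 1) = p ^ (d - 1) * ((p - 1) + 1) := by ring
    _ = p ^ (d - 1) * p := by rw [hp1]
  omega

theorem main_count (n d : ℕ) (hn : 1 < n) (hd : 2 ≤ d) :
    Nat.card {a : Fin d → ZMod n // (mkPoly d a).Separable} = Nat.totient (n ^ d) := by
  haveI : Fact (1 < n) := ⟨hn⟩
  haveI : NeZero n := ⟨by omega⟩
  have hn0 : n ≠ 0 := by omega
  set P := n.primeFactors with hP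
  -- the CRT ring hom and the induced additive map on coefficient tuples
  set Φ : ZMod n →+* Π p : P, ZMod (p : ℕ) :=
    Pi.ringHom fun p : P => ZMod.castHom (Nat.dvd_of_mem_primeFactors p.2) (ZMod (p : ℕ)) with hΦ
  have hΦs : Function.Surjective ⇑Φ := crt_surjective n hn0
  set φ : (Fin d → ZMod n) →+ (Π p : P, Fin d → ZMod (p : ℕ)) :=
    AddMonoidHom.mk' (fun a => fun p i => Φ (a i) p) (by
      intro a b
      funext p i
      simp) with hφ
  have hφs : Function.Surjective ⇑φ := by
    intro b
    refine ⟨fun i => (hΦs (fun p => b p i)).choose, ?_⟩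
    funext p i
    exact congrFun ((hΦs (fun p => b p i)).choose_spec) p
  set T : Set (Π p : P, Fin d → ZMod (p : ℕ)) :=
    {b | ∀ p : P, (mkPoly d (b p)).Separable} with hT
  -- identify the set we want to count with the preimage of T
  have hpre : ⇑φ ⁻¹' T = {a : Fin d → ZMod n | (mkPoly d a).Separable} := by
    ext a
    simp only [Set.mem_preimage, hT, Set.mem_setOf_eq]
    rw [separable_iff_forall_prime n hn (mkPoly d a), Subtype.forall]
    constructor
    · intro H p hp
      have := H p hp
      rw [mkPoly_map]
      exact this
    · intro H p hp
      have := H p hp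
      rw [mkPoly_map] at this
      exact this
  -- counting
  have hcount := card_preimage_addHom φ hφs T
  rw [hpre] at hcount
  have hker := card_ker_addHom φ hφs
  -- card of source and target
  have hA : Nat.card (Fin d → ZMod n) = n ^ d := by
    simp [Nat.card_pi, Nat.card_zmod]
  have hB : Nat.card (Π p : P, Fin d → ZMod (p : ℕ)) = ∏ p ∈ P, p ^ d := by
    rw [Nat.card_pi, ← Finset.prod_coe_sort P (fun p => p ^ d)]
    apply Finset.prod_congr rfl
    intro p _
    simp [Nat.card_pi, Nat.card_zmod]
  -- card of T
  have hTcard : Nat.card T = ∏ p ∈ P, p ^ (d - 1) * (p - 1) := by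
    have eT : T ≃ Π p : P, {c : Fin d → ZMod (p : ℕ) // (mkPoly d c).Separable} :=
      Equiv.subtypePiEquivPi (p := fun (p : P) (c : Fin d → ZMod (p : ℕ)) => (mkPoly d c).Separable)
    rw [Nat.card_congr eT, Nat.card_pi, ← Finset.prod_coe_sort P (fun p => p ^ (d - 1) * (p - 1))]
    apply Finset.prod_congr rfl
    intro p _
    rw [Sp_eq (p : ℕ) d (Nat.prime_of_mem_primeFactors p.2) hd]
  -- assemble
  rw [hA, hB] at hker
  rw [hTcard] at hcount
  have hrpos : 0 < ∏ p ∈ P, p ^ d :=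
    Finset.prod_pos fun p hp => pow_pos (Nat.prime_of_mem_primeFactors hp).pos d
  apply Nat.eq_of_mul_eq_mul_right hrpos
  have hc2 : Nat.card {a : Fin d → ZMod n // (mkPoly d a).Separable}
      = (∏ p ∈ P, p ^ (d - 1) * (p - 1)) * Nat.card φ.ker := hcount
  rw [hc2]
  -- goal : (∏ p^(d-1)*(p-1)) * card ker * (∏ p^d) = φ(n^d) * (∏ p^d)
  calc (∏ p ∈ P, p ^ (d - 1) * (p - 1)) * Nat.card φ.ker * (∏ p ∈ P, p ^ d)
      = (∏ p ∈ P, p ^ (d - 1) * (p - 1)) * ((∏ p ∈ P, p ^ d) * Nat.card φ.ker) := by ring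
    _ = (∏ p ∈ P, p ^ (d - 1) * (p - 1)) * n ^ d := by rw [← hker]
    _ = Nat.totient (n ^ d) * ∏ p ∈ P, p ^ d := by
        rw [totient_pow_prod hn0 (show d ≠ 0 by omega), pow_prod_fact hn0 d,
          ← Finset.prod_mul_distrib, ← Finset.prod_mul_distrib]
        apply Finset.prod_congr rfl
        intro p hp
        have hk : 1 ≤ n.factorization p :=
          Nat.Prime.factorization_pos_of_dvd (Nat.prime_of_mem_primeFactors hp) hn0
            (Nat.dvd_of_mem_primeFactors hp)
        have h4 : 1 ≤ d * n.factorization p :=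
          Nat.one_le_iff_ne_zero.mpr (by positivity)
        have h3 : p ^ (d - 1) * p ^ (d * n.factorization p)
            = p ^ (d * n.factorization p - 1) * p ^ d := by
          rw [← pow_add, ← pow_add]
          congr 1
          set m := d * n.factorization p with hm
          omega
        calc p ^ (d - 1) * (p - 1) * p ^ (d * n.factorization p)
            = p ^ (d - 1) * p ^ (d * n.factorization p) * (p - 1) := by ring
          _ = p ^ (d * n.factorization p - 1) * p ^ d * (p - 1) := by rw [h3]
          _ = p ^ (d * n.factorization p - 1) * (p - 1) * p ^ d := by ring


/-- The number of monic separable polynomials of degree `d ≥ 2` over `ℤ/n`, for `n > 1`,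
is `φ(n^d) = φ(n)·n^(d-1)`. -/
theorem count_monic_separable_zmod_n (n d : ℕ) (hn : 1 < n) (hd : 2 ≤ d) :
    Nat.card {f : (ZMod n)[X] | f.Monic ∧ f.natDegree = d ∧ f.Separable}
        = Nat.totient (n ^ d) ∧
      Nat.totient (n ^ d) = Nat.totient n * n ^ (d - 1) := by
  haveI : Fact (1 < n) := ⟨hn⟩
  constructor
  · have h1 : Nat.card {f : (ZMod n)[X] // f.Monic ∧ f.natDegree = d ∧ f.Separable}
        = Nat.card {a : Fin d → ZMod n // (mkPoly d a).Separable} :=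
      (Nat.card_congr (predEquiv d (fun f : (ZMod n)[X] => f.Separable))).symm
    exact h1.trans (main_count n d hn hd)
  · exact totient_pow_eq n d hn (by omega)
end

section
/- A monic polynomial f over a commutative ring R with no nontrivial idempotents is separable if and only if its discriminant disc(f) = det(A) is a unit in R, where A is the matrix with (i+1,j+1)-entry tr(x^{i+j}) and tr is the trace form of R[x]/(f). -/
open TensorProduct Polynomial
open scoped Matrix

/-- An `R`-algebra `A` is separable if `A` is projective as a module over the
enveloping algebra `A ⊗[R] A` (for commutative `A`, which acts via multiplication). -/
def IsSeparableAlgebra (R A : Type*) [CommRing R] [CommRing A] [Algebra R A] : Prop :=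
  letI : Module (A ⊗[R] A) A :=
    Module.compHom A (Algebra.TensorProduct.lmul' (S := A) R).toRingHom
  Module.Projective (A ⊗[R] A) A

/-- A polynomial `f ∈ R[x]` is separable if `R[x]/(f)` is a separable `R`-algebra. -/
def Polynomial.IsSeparablePoly {R : Type*} [CommRing R] (f : R[X]) : Prop :=
  IsSeparableAlgebra R (AdjoinRoot f)

section Bridge


variable {R S : Type*} [CommRing R] [CommRing S] [Algebra R S]

theorem isSeparableAlgebra_iff_exists :
    IsSeparableAlgebra R S ↔ ∃ t : S ⊗[R] S,
      (∀ s : S, ((1 : S) ⊗ₜ[R] s - s ⊗ₜ[R] (1 : S)) * t = 0) ∧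
        Algebra.TensorProduct.lmul' (S := S) R t = 1 := by
  letI : Module (S ⊗[R] S) S :=
    Module.compHom S (Algebra.TensorProduct.lmul' (S := S) R).toRingHom
  have hsmul : ∀ (z : S ⊗[R] S) (s : S),
      z • s = Algebra.TensorProduct.lmul' (S := S) R z * s := fun _ _ => rfl
  let μ : (S ⊗[R] S) →ₗ[S ⊗[R] S] S :=
    { toFun := Algebra.TensorProduct.lmul' (S := S) R
      map_add' := map_add _
      map_smul' := fun z w => by
        simp only [smul_eq_mul, map_mul, RingHom.id_apply, hsmul] }
  have hμ : ∀ z : S ⊗[R] S, μ z = Algebra.TensorProduct.lmul' (S := S) R z := fun _ => rfl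
  constructor
  · intro h
    haveI h' : Module.Projective (S ⊗[R] S) S := h
    have hsurj : Function.Surjective μ := fun s =>
      ⟨s ⊗ₜ[R] 1, by simp [hμ, Algebra.TensorProduct.lmul'_apply_tmul]⟩
    obtain ⟨σ, hσ⟩ := Module.projective_lifting_property μ LinearMap.id hsurj
    refine ⟨σ 1, fun s => ?_, ?_⟩
    · have e1 : ((1 : S) ⊗ₜ[R] s) • (1 : S) = s := by
        rw [hsmul, Algebra.TensorProduct.lmul'_apply_tmul]; ring
      have e2 : (s ⊗ₜ[R] (1 : S)) • (1 : S) = s := by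
        rw [hsmul, Algebra.TensorProduct.lmul'_apply_tmul]; ring
      have h1 := σ.map_smul ((1 : S) ⊗ₜ[R] s) 1
      have h2 := σ.map_smul (s ⊗ₜ[R] (1 : S)) 1
      rw [e1] at h1; rw [e2] at h2
      rw [sub_mul, sub_eq_zero]
      calc (1 : S) ⊗ₜ[R] s * σ 1 = ((1:S) ⊗ₜ[R] s) • σ 1 := (smul_eq_mul _ _).symm
        _ = σ s := h1.symm
        _ = (s ⊗ₜ[R] (1:S)) • σ 1 := h2
        _ = s ⊗ₜ[R] (1:S) * σ 1 := smul_eq_mul _ _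
    · have := congrArg (fun g => g 1) hσ
      simpa [hμ] using this
  · rintro ⟨t, h1, h2⟩
    have hcomm : ∀ s : S, ((1 : S) ⊗ₜ[R] s) * t = (s ⊗ₜ[R] (1 : S)) * t := fun s => by
      have := h1 s; rwa [sub_mul, sub_eq_zero] at this
    have hz : ∀ z : S ⊗[R] S,
        z * t = ((Algebra.TensorProduct.lmul' (S := S) R z) ⊗ₜ[R] (1 : S)) * t := by
      intro z
      induction z using TensorProduct.induction_on with
      | zero => simp
      | tmul a b =>
        rw [show ((a ⊗ₜ[R] b : S ⊗[R] S)) * t = (a ⊗ₜ[R] (1:S)) * (((1:S) ⊗ₜ[R] b) * t) from by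
            rw [← mul_assoc, Algebra.TensorProduct.tmul_mul_tmul, mul_one, one_mul],
          hcomm, ← mul_assoc, Algebra.TensorProduct.tmul_mul_tmul, mul_one,
          Algebra.TensorProduct.lmul'_apply_tmul]
      | add x y hx hy =>
        rw [add_mul, hx, hy, map_add, TensorProduct.add_tmul, add_mul]
    let σ : S →ₗ[S ⊗[R] S] (S ⊗[R] S) :=
      { toFun := fun s => (s ⊗ₜ[R] (1 : S)) * t
        map_add' := fun x y => by simp only [TensorProduct.add_tmul, add_mul]
        map_smul' := fun z s => by
          simp only [RingHom.id_apply, smul_eq_mul]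
          rw [hsmul]
          calc ((Algebra.TensorProduct.lmul' (S := S) R z * s) ⊗ₜ[R] (1:S)) * t
              = (s ⊗ₜ[R] (1:S)) * (((Algebra.TensorProduct.lmul' (S := S) R z) ⊗ₜ[R] (1:S)) * t) := by
                rw [← mul_assoc, Algebra.TensorProduct.tmul_mul_tmul, mul_one, mul_comm s]
            _ = (s ⊗ₜ[R] (1:S)) * (z * t) := by rw [← hz]
            _ = z * ((s ⊗ₜ[R] (1:S)) * t) := by ring }
    refine Module.Projective.of_split σ μ ?_
    ext s
    simp only [LinearMap.comp_apply, LinearMap.id_apply, LinearMap.coe_mk, AddHom.coe_mk, σ, μ]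
    rw [map_mul, Algebra.TensorProduct.lmul'_apply_tmul, h2, mul_one, mul_one]


end Bridge

section Matrices


variable {R S : Type*} [CommRing R] [CommRing S] [Algebra R S]
variable {ι : Type*} [Fintype ι] [DecidableEq ι] (b : Module.Basis ι R S)

noncomputable def traceMat : Matrix ι ι R :=
  Matrix.of fun i j => Algebra.trace R S (b i * b j)

lemma A_sym (k i j : ι) :
    Algebra.leftMulMatrix b (b k) i j = Algebra.leftMulMatrix b (b j) i k := by
  rw [Algebra.leftMulMatrix_eq_repr_mul, Algebra.leftMulMatrix_eq_repr_mul, mul_comm]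

lemma traceMat_eq (i j : ι) :
    traceMat b i j =
      Matrix.trace (Algebra.leftMulMatrix b (b i) * Algebra.leftMulMatrix b (b j)) := by
  rw [traceMat, Matrix.of_apply, Algebra.trace_eq_matrix_trace b, _root_.map_mul]

lemma chain (P : Matrix ι ι R)
    (hP : ∀ k, Algebra.leftMulMatrix b (b k) * P = P * (Algebra.leftMulMatrix b (b k))ᵀ)
    (i j : ι) :
    (traceMat b * P) i j =
      (∑ m, ∑ q, P m q • (Algebra.leftMulMatrix b (b q) * Algebra.leftMulMatrix b (b m))) j i := by
  set A : ι → Matrix ι ι R := fun k => Algebra.leftMulMatrix b (b k) with hA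
  have hsym : ∀ k i j, A k i j = A j i k := fun k i j => A_sym b k i j
  calc (traceMat b * P) i j
      = ∑ q, ∑ k, ∑ m, A i k m * A q m k * P q j := by
        simp only [Matrix.mul_apply, traceMat_eq, Matrix.trace, Matrix.diag_apply,
          Finset.sum_mul, hA]
    _ = ∑ k, ∑ m, A i k m * ∑ q, A k m q * P q j := by
        rw [Finset.sum_comm]
        refine Finset.sum_congr rfl fun k _ => ?_
        rw [Finset.sum_comm]
        refine Finset.sum_congr rfl fun m _ => ?_
        rw [Finset.mul_sum]
        refine Finset.sum_congr rfl fun q _ => ?_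
        rw [hsym q m k, mul_assoc]
    _ = ∑ k, ∑ m, A i k m * ∑ q, P m q * A k j q := by
        refine Finset.sum_congr rfl fun k _ => Finset.sum_congr rfl fun m _ => ?_
        congr 1
        have := congrFun (congrFun (hP k) m) j
        simpa [Matrix.mul_apply, Matrix.transpose_apply, hA] using this
    _ = ∑ m, ∑ q, P m q * ∑ k, A q j k * A m k i := by
        simp only [Finset.mul_sum]
        rw [Finset.sum_comm]
        refine Finset.sum_congr rfl fun m _ => ?_
        rw [Finset.sum_comm]
        refine Finset.sum_congr rfl fun q _ => Finset.sum_congr rfl fun k _ => ?_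
        rw [hsym i k m, hsym k j q]
        ring
    _ = (∑ m, ∑ q, P m q • (A q * A m)) j i := by
        simp only [Matrix.sum_apply, Matrix.smul_apply, Matrix.mul_apply, smul_eq_mul,
          Finset.mul_sum]

lemma chain_one (P : Matrix ι ι R)
    (hP : ∀ k, Algebra.leftMulMatrix b (b k) * P = P * (Algebra.leftMulMatrix b (b k))ᵀ) :
    traceMat b * P = 1 ↔
      (∑ m, ∑ q, P m q • (Algebra.leftMulMatrix b (b q) * Algebra.leftMulMatrix b (b m))) = 1 := by
  have hone : ∀ i j : ι, (1 : Matrix ι ι R) i j = (1 : Matrix ι ι R) j i := fun i j => by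
    simp [Matrix.one_apply, eq_comm]
  constructor <;> intro h <;> ext i j
  · rw [← chain b P hP j i, h, hone]
  · rw [chain b P hP i j, h, hone]

/-! ### Tensor coefficient lemmas -/

lemma E_left (s : S) (z : S ⊗[R] S) (i : ι) :
    TensorProduct.equivFinsuppOfBasisRight b ((s ⊗ₜ[R] (1 : S)) * z) i =
      s * TensorProduct.equivFinsuppOfBasisRight b z i := by
  induction z using TensorProduct.induction_on with
  | zero => simp
  | tmul m n =>
    simp only [Algebra.TensorProduct.tmul_mul_tmul, one_mul,
      TensorProduct.equivFinsuppOfBasisRight_apply_tmul_apply]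
    rw [mul_smul_comm]
  | add x y hx hy =>
    simp only [mul_add, map_add, Finsupp.add_apply, hx, hy, left_distrib]

lemma E_right (s : S) (z : S ⊗[R] S) (i : ι) :
    TensorProduct.equivFinsuppOfBasisRight b (((1 : S) ⊗ₜ[R] s) * z) i =
      ∑ j, Algebra.leftMulMatrix b s i j • TensorProduct.equivFinsuppOfBasisRight b z j := by
  induction z using TensorProduct.induction_on with
  | zero => simp
  | tmul m n =>
    simp only [Algebra.TensorProduct.tmul_mul_tmul, one_mul,
      TensorProduct.equivFinsuppOfBasisRight_apply_tmul_apply]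
    have : b.repr (s * n) i = ∑ j, Algebra.leftMulMatrix b s i j * b.repr n j := by
      rw [← Algebra.leftMulMatrix_mulVec_repr b s n]
      rfl
    rw [this, Finset.sum_smul]
    exact Finset.sum_congr rfl fun j _ => by rw [mul_smul]
  | add x y hx hy =>
    simp only [mul_add, map_add, Finsupp.add_apply, hx, hy, smul_add,
      Finset.sum_add_distrib]

lemma E_decomp (z : S ⊗[R] S) :
    z = ∑ i, (TensorProduct.equivFinsuppOfBasisRight b z i) ⊗ₜ[R] (b i) := by
  conv_lhs => rw [← (TensorProduct.equivFinsuppOfBasisRight b).symm_apply_apply z]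
  rw [TensorProduct.equivFinsuppOfBasisRight_symm_apply]
  rw [Finsupp.sum_fintype]
  intro i
  simp


lemma repr_sum_smul (v : ι → S) (x : S) (hx : x = ∑ j, v j) (k : ι) :
    b.repr x k = ∑ j, b.repr (v j) k := by
  subst hx
  simp [map_sum]

theorem isUnit_det_traceMat (t : S ⊗[R] S)
    (h1 : ∀ s : S, ((1 : S) ⊗ₜ[R] s - s ⊗ₜ[R] (1 : S)) * t = 0)
    (h2 : Algebra.TensorProduct.lmul' (S := S) R t = 1) :
    IsUnit (traceMat b).det := by
  set c : ι → S := fun i => TensorProduct.equivFinsuppOfBasisRight b t i with hc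
  set P : Matrix ι ι R := Matrix.of fun k i => b.repr (c i) k with hPdef
  have hcomm : ∀ s : S, ((1 : S) ⊗ₜ[R] s) * t = (s ⊗ₜ[R] (1 : S)) * t := fun s => by
    have := h1 s; rwa [sub_mul, sub_eq_zero] at this
  have hrel : ∀ (s : S) (i : ι),
      s * c i = ∑ j, Algebra.leftMulMatrix b s i j • c j := by
    intro s i
    have h3 := congrArg (fun z => TensorProduct.equivFinsuppOfBasisRight b z i) (hcomm s)
    simp only [E_right, E_left] at h3
    exact h3.symm
  have hP : ∀ s : S,
      Algebra.leftMulMatrix b s * P = P * (Algebra.leftMulMatrix b s)ᵀ := by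
    intro s; ext k i
    have e1 : (Algebra.leftMulMatrix b s * P) k i = b.repr (s * c i) k := by
      rw [← Algebra.leftMulMatrix_mulVec_repr b s (c i)]
      simp [Matrix.mul_apply, Matrix.mulVec, dotProduct, hPdef]
    have e2 : (P * (Algebra.leftMulMatrix b s)ᵀ) k i
        = b.repr (∑ j, Algebra.leftMulMatrix b s i j • c j) k := by
      simp only [map_sum, Finsupp.coe_finset_sum, Finset.sum_apply, _root_.map_smul,
        Finsupp.smul_apply, smul_eq_mul, Matrix.mul_apply, Matrix.transpose_apply, hPdef,
        Matrix.of_apply]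
      exact Finset.sum_congr rfl fun j _ => mul_comm _ _
    rw [e1, e2, hrel]
  have hmu : ∑ j, c j * b j = 1 := by
    have h4 := congrArg (Algebra.TensorProduct.lmul' (S := S) R) (E_decomp b t)
    rw [h2, map_sum] at h4
    simpa [Algebra.TensorProduct.lmul'_apply_tmul] using h4.symm
  have hAc : ∀ j, Algebra.leftMulMatrix b (c j)
      = ∑ k, P k j • Algebra.leftMulMatrix b (b k) := by
    intro j
    conv_lhs => rw [← b.sum_repr (c j)]
    rw [map_sum]
    exact Finset.sum_congr rfl fun k _ => by
      rw [_root_.map_smul]; rfl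
  have hcommA : ∀ k j, Algebra.leftMulMatrix b (b k) * Algebra.leftMulMatrix b (b j)
      = Algebra.leftMulMatrix b (b j) * Algebra.leftMulMatrix b (b k) := by
    intro k j
    rw [← _root_.map_mul (Algebra.leftMulMatrix b) (b k) (b j),
      ← _root_.map_mul (Algebra.leftMulMatrix b) (b j) (b k), mul_comm]
  have hsum : (∑ m, ∑ q, P m q •
      (Algebra.leftMulMatrix b (b q) * Algebra.leftMulMatrix b (b m))) = 1 := by
    calc ∑ m, ∑ q, P m q • (Algebra.leftMulMatrix b (b q) * Algebra.leftMulMatrix b (b m))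
        = ∑ q, ∑ m, P m q • (Algebra.leftMulMatrix b (b m) * Algebra.leftMulMatrix b (b q)) := by
          rw [Finset.sum_comm]
          exact Finset.sum_congr rfl fun q _ => Finset.sum_congr rfl fun m _ => by
            rw [hcommA]
      _ = ∑ q, (∑ m, P m q • Algebra.leftMulMatrix b (b m)) * Algebra.leftMulMatrix b (b q) := by
          simp only [Finset.sum_mul, Matrix.smul_mul]
      _ = ∑ q, Algebra.leftMulMatrix b (c q) * Algebra.leftMulMatrix b (b q) := by
          simp only [hAc]
      _ = ∑ q, Algebra.leftMulMatrix b (c q * b q) := by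
          simp only [_root_.map_mul]
      _ = Algebra.leftMulMatrix b (∑ q, c q * b q) := (map_sum _ _ _).symm
      _ = 1 := by rw [hmu, _root_.map_one]
  have hfin : traceMat b * P = 1 := (chain_one b P (fun k => hP (b k))).mpr hsum
  exact Matrix.isUnit_det_of_right_inverse hfin

theorem exists_t_of_isUnit_det (h : IsUnit (traceMat b).det) :
    ∃ t : S ⊗[R] S, (∀ s : S, ((1 : S) ⊗ₜ[R] s - s ⊗ₜ[R] (1 : S)) * t = 0) ∧
      Algebra.TensorProduct.lmul' (S := S) R t = 1 := by
  set T := traceMat b with hT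
  set P := T⁻¹ with hPdef
  have hTP : T * P = 1 := Matrix.mul_nonsing_inv _ h
  have hPT : P * T = 1 := Matrix.nonsing_inv_mul _ h
  have key : ∀ x y : S, ∑ k, Algebra.trace R S (x * b k) * b.repr y k
      = Algebra.trace R S (x * y) := by
    intro x y
    conv_rhs => rw [← b.sum_repr y]
    rw [Finset.mul_sum, map_sum]
    refine Finset.sum_congr rfl fun k _ => ?_
    rw [mul_smul_comm, _root_.map_smul, smul_eq_mul, mul_comm]
  have hTA : ∀ s : S, T * Algebra.leftMulMatrix b s
      = (Algebra.leftMulMatrix b s)ᵀ * T := by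
    intro s; ext i j
    have e1 : (T * Algebra.leftMulMatrix b s) i j = Algebra.trace R S (b i * (s * b j)) := by
      rw [Matrix.mul_apply]
      have : ∀ k, T i k * Algebra.leftMulMatrix b s k j
          = Algebra.trace R S (b i * b k) * b.repr (s * b j) k := fun k => by
        rw [hT, traceMat, Matrix.of_apply, Algebra.leftMulMatrix_eq_repr_mul]
      rw [Finset.sum_congr rfl fun k _ => this k, key]
    have e2 : ((Algebra.leftMulMatrix b s)ᵀ * T) i j
        = Algebra.trace R S (b j * (s * b i)) := by
      rw [Matrix.mul_apply]
      have : ∀ k, (Algebra.leftMulMatrix b s)ᵀ i k * T k j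
          = Algebra.trace R S (b j * b k) * b.repr (s * b i) k := fun k => by
        rw [hT, traceMat, Matrix.of_apply, Matrix.transpose_apply,
          Algebra.leftMulMatrix_eq_repr_mul, mul_comm (b k) (b j), mul_comm]
      rw [Finset.sum_congr rfl fun k _ => this k, key]
    rw [e1, e2]
    congr 1
    ring
  have hP : ∀ s : S,
      Algebra.leftMulMatrix b s * P = P * (Algebra.leftMulMatrix b s)ᵀ := by
    intro s
    calc Algebra.leftMulMatrix b s * P
        = (P * T) * (Algebra.leftMulMatrix b s * P) := by rw [hPT, one_mul]
      _ = P * (T * Algebra.leftMulMatrix b s) * P := by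
          rw [Matrix.mul_assoc, Matrix.mul_assoc, Matrix.mul_assoc]
      _ = P * ((Algebra.leftMulMatrix b s)ᵀ * T) * P := by rw [hTA]
      _ = P * (Algebra.leftMulMatrix b s)ᵀ * (T * P) := by
          rw [Matrix.mul_assoc, Matrix.mul_assoc, Matrix.mul_assoc]
      _ = P * (Algebra.leftMulMatrix b s)ᵀ := by rw [hTP, Matrix.mul_one]
  set c : ι → S := fun j => ∑ k, P k j • b k with hc
  have hrepr : ∀ j k, b.repr (c j) k = P k j := by
    intro j k
    rw [hc]
    simp only [map_sum, Finsupp.coe_finset_sum, Finset.sum_apply, _root_.map_smul,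
      Finsupp.smul_apply, Module.Basis.repr_self, smul_eq_mul]
    rw [Finset.sum_eq_single k]
    · simp
    · intro j' _ hj'; simp [Finsupp.single_apply, hj']
    · intro hk; exact absurd (Finset.mem_univ k) hk
  have hrel : ∀ (s : S) (i : ι),
      s * c i = ∑ j, Algebra.leftMulMatrix b s i j • c j := by
    intro s i
    apply b.repr.injective
    ext k
    rw [← Algebra.leftMulMatrix_mulVec_repr b s (c i)]
    have e1 : (Algebra.leftMulMatrix b s *ᵥ b.repr (c i)) k
        = (Algebra.leftMulMatrix b s * P) k i := by
      simp [Matrix.mulVec, dotProduct, Matrix.mul_apply, hrepr]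
    have e2 : b.repr (∑ j, Algebra.leftMulMatrix b s i j • c j) k
        = (P * (Algebra.leftMulMatrix b s)ᵀ) k i := by
      simp only [map_sum, Finsupp.coe_finset_sum, Finset.sum_apply, _root_.map_smul,
        Finsupp.smul_apply, smul_eq_mul, Matrix.mul_apply, Matrix.transpose_apply, hrepr]
      exact Finset.sum_congr rfl fun j _ => mul_comm _ _
    rw [e1, e2, hP]
  refine ⟨∑ j, (c j) ⊗ₜ[R] (b j), ?_, ?_⟩
  · intro s
    rw [sub_mul, sub_eq_zero]
    have hEt : ∀ i, TensorProduct.equivFinsuppOfBasisRight b (∑ j, (c j) ⊗ₜ[R] (b j)) i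
        = c i := by
      intro i
      rw [map_sum]
      simp only [Finsupp.coe_finset_sum, Finset.sum_apply,
        TensorProduct.equivFinsuppOfBasisRight_apply_tmul_apply, Module.Basis.repr_self]
      rw [Finset.sum_eq_single i]
      · simp
      · intro j' _ hj'; simp [Finsupp.single_apply, hj']
      · intro hk; exact absurd (Finset.mem_univ i) hk
    apply (TensorProduct.equivFinsuppOfBasisRight b).injective
    ext i
    rw [E_right, E_left]
    simp only [hEt]
    exact (hrel s i).symm
  · have hAc : ∀ j, Algebra.leftMulMatrix b (c j)
        = ∑ k, P k j • Algebra.leftMulMatrix b (b k) := by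
      intro j
      conv_lhs => rw [← b.sum_repr (c j)]
      rw [map_sum]
      refine Finset.sum_congr rfl fun k _ => ?_
      rw [_root_.map_smul, hrepr]
    have hcommA : ∀ k j, Algebra.leftMulMatrix b (b k) * Algebra.leftMulMatrix b (b j)
        = Algebra.leftMulMatrix b (b j) * Algebra.leftMulMatrix b (b k) := by
      intro k j
      rw [← _root_.map_mul (Algebra.leftMulMatrix b) (b k) (b j),
        ← _root_.map_mul (Algebra.leftMulMatrix b) (b j) (b k), mul_comm]
    have hbig := (chain_one b P (fun k => hP (b k))).mp hTP
    have hone : Algebra.leftMulMatrix b (∑ j, c j * b j) = Algebra.leftMulMatrix b 1 := by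
      rw [map_one, map_sum]
      calc ∑ j, Algebra.leftMulMatrix b (c j * b j)
          = ∑ j, ∑ k, P k j •
              (Algebra.leftMulMatrix b (b k) * Algebra.leftMulMatrix b (b j)) := by
            refine Finset.sum_congr rfl fun j _ => ?_
            rw [_root_.map_mul, hAc, Finset.sum_mul]
            exact Finset.sum_congr rfl fun k _ => by rw [Matrix.smul_mul]
        _ = ∑ m, ∑ q, P m q •
              (Algebra.leftMulMatrix b (b q) * Algebra.leftMulMatrix b (b m)) := by
            rw [Finset.sum_comm]
            exact Finset.sum_congr rfl fun m _ => Finset.sum_congr rfl fun q _ => by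
              rw [hcommA]
        _ = 1 := hbig
    have hmu : ∑ j, c j * b j = 1 := Algebra.leftMulMatrix_injective b hone
    rw [map_sum]
    simp only [Algebra.TensorProduct.lmul'_apply_tmul]
    exact hmu


end Matrices

set_option maxHeartbeats 1000000 in
/-- Over a commutative ring with no nontrivial idempotents, a monic polynomial `f` is
separable iff the determinant of the trace matrix `(tr(x^(i+j)))` of `R[x]/(f)` is a unit. -/
theorem separable_iff_isUnit_disc {R : Type*} [CommRing R]
    (hidem : ∀ e : R, e * e = e → e = 0 ∨ e = 1) (f : R[X]) (hf : f.Monic) :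
    f.IsSeparablePoly ↔
      IsUnit (Matrix.det (Matrix.of fun i j : Fin f.natDegree =>
        Algebra.trace R (AdjoinRoot f) (AdjoinRoot.root f ^ (i.1 + j.1)))) := by
  classical
  let pb := AdjoinRoot.powerBasis' hf
  have hb : ∀ i : Fin f.natDegree, pb.basis i = AdjoinRoot.root f ^ (i : ℕ) := fun i => by
    rw [PowerBasis.coe_basis, AdjoinRoot.powerBasis'_gen]
  have hmat : (Matrix.of fun i j : Fin f.natDegree =>
      Algebra.trace R (AdjoinRoot f) (AdjoinRoot.root f ^ (i.1 + j.1))) = traceMat pb.basis := by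
    ext i j
    show _ = Algebra.trace R (AdjoinRoot f) (pb.basis i * pb.basis j)
    rw [Matrix.of_apply, hb, hb, ← pow_add]
  rw [Polynomial.IsSeparablePoly, isSeparableAlgebra_iff_exists, hmat]
  constructor
  · rintro ⟨t, h1, h2⟩
    exact isUnit_det_traceMat pb.basis t h1 h2
  · intro h
    exact exists_t_of_isUnit_det pb.basis h
end

section
/- The number of separable polynomials of degree exactly 1 in (ℤ/p^k)[x] is φ(p^k)(p^k + p^{k-1} - 1). -/
open TensorProduct Polynomial

theorem isSeparableAlgebra_of_surj {R A : Type*} [CommRing R] [CommRing A] [Algebra R A]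
    (h : Function.Surjective (algebraMap R A)) : IsSeparableAlgebra R A := by
  letI : Module (A ⊗[R] A) A :=
    Module.compHom A (Algebra.TensorProduct.lmul' (S := A) R).toRingHom
  set μ := Algebra.TensorProduct.lmul' (S := A) R with hμ
  have key : ∀ z : A ⊗[R] A, z = (μ z) ⊗ₜ[R] 1 := by
    intro z
    induction z using TensorProduct.induction_on with
    | zero => simp
    | tmul a b =>
        obtain ⟨r, rfl⟩ := h b
        rw [Algebra.algebraMap_eq_smul_one, TensorProduct.tmul_smul]
        rw [map_smul, ← TensorProduct.smul_tmul', Algebra.TensorProduct.lmul'_apply_tmul,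
          mul_one]
    | add x y hx hy =>
        rw [map_add, TensorProduct.add_tmul]
        exact congrArg₂ (· + ·) hx hy
  have smul_def : ∀ (z : A ⊗[R] A) (a : A), z • a = μ z * a := fun z a => rfl
  let L : (A ⊗[R] A) →ₗ[A ⊗[R] A] A :=
    { toFun := μ
      map_add' := map_add μ
      map_smul' := by
        intro z w
        simp only [RingHom.id_apply, smul_eq_mul, smul_def, map_mul] }
  have hbij : Function.Bijective L := by
    constructor
    · intro x y hxy
      rw [key x, key y]
      exact congrArg (· ⊗ₜ[R] 1) hxy
    · intro a
      exact ⟨a ⊗ₜ 1, by simp [L, hμ]⟩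
  exact Module.Projective.of_equiv (LinearEquiv.ofBijective L hbij)

theorem not_sep {R K : Type*} [CommRing R] [CommRing K] [Nontrivial K]
    (θ : R →+* K) (u b : R) (hu : θ u = 0) (hb : θ b = 0) :
    ¬ (C u * X + C b).IsSeparablePoly := by
  intro hsep
  letI : Algebra R K := θ.toAlgebra
  set f : R[X] := C u * X + C b with hf
  set A := AdjoinRoot f with hA
  letI : Module (A ⊗[R] A) A :=
    Module.compHom A (Algebra.TensorProduct.lmul' (S := A) R).toRingHom
  set S := DualNumber K with hS
  have halgKS : ∀ c : R, algebraMap R S c = TrivSqZeroExt.inl (θ c) := fun c =>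
    TrivSqZeroExt.algebraMap_eq_inl' _ _ _ _
  have h1 : aeval (0 : S) f = 0 := by
    simp [hf, halgKS, hb]
  have h2 : aeval (DualNumber.eps : S) f = 0 := by
    simp [hf, halgKS, hb, hu]
    erw [halgKS u, halgKS b]
    simp [hu, hb]
  set φ₁ := AdjoinRoot.liftAlgHom f (Algebra.ofId R S) 0 (by rw [Algebra.toRingHom_ofId]; exact h1) with hφ₁
  set φ₂ := AdjoinRoot.liftAlgHom f (Algebra.ofId R S) DualNumber.eps (by rw [Algebra.toRingHom_ofId]; exact h2) with hφ₂
  set ψ := Algebra.TensorProduct.productMap φ₁ φ₂ with hψ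
  set μ := Algebra.TensorProduct.lmul' (S := A) R with hμ
  -- the multiplication as an E-linear map
  have smul_def : ∀ (z : A ⊗[R] A) (a : A), z • a = μ z * a := fun z a => rfl
  let L : (A ⊗[R] A) →ₗ[A ⊗[R] A] A :=
    { toFun := μ
      map_add' := map_add μ
      map_smul' := by
        intro z w
        simp only [RingHom.id_apply, smul_eq_mul, smul_def, map_mul] }
  have hLsurj : Function.Surjective L := fun a =>
    ⟨a ⊗ₜ 1, by simp [L, hμ, Algebra.TensorProduct.lmul'_apply_tmul]⟩
  haveI hproj : Module.Projective (A ⊗[R] A) A := hsep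
  obtain ⟨s, hs⟩ := Module.projective_lifting_property L LinearMap.id hLsurj
  set e := s 1 with he
  have hμe : μ e = 1 := congrFun (congrArg (↑·) hs) 1
  have hkill : ∀ z : A ⊗[R] A, μ z = 0 → z * e = 0 := by
    intro z hz
    have : z * s 1 = s (z • (1 : A)) := (s.map_smul z 1).symm
    rw [smul_def, hz, zero_mul, map_zero] at this
    exact this
  -- the diagonal element
  set x := AdjoinRoot.root f with hx
  set δ : A ⊗[R] A := x ⊗ₜ 1 - 1 ⊗ₜ x with hδ
  have hμδ : μ δ = 0 := by
    simp [hδ, hμ, Algebra.TensorProduct.lmul'_apply_tmul]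
  have hδe : δ * (1 - e) = δ := by
    rw [mul_sub, mul_one, hkill δ hμδ, sub_zero]
  -- first components
  set F : S →ₐ[R] K := (TrivSqZeroExt.fstHom K K K).restrictScalars R with hF
  have hsame : ∀ a : A, F (φ₂ a) = F (φ₁ a) := by
    have : F.comp φ₂ = F.comp φ₁ := by
      apply AdjoinRoot.algHom_ext
      simp only [AlgHom.comp_apply, hφ₁, hφ₂, AdjoinRoot.liftAlgHom_root]
      simp [hF]
      rfl
    exact fun a => AlgHom.congr_fun this a
  have hcomp : (F.comp ψ) = (F.comp φ₁).comp μ := by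
    apply Algebra.TensorProduct.ext'
    intro a b'
    simp only [AlgHom.comp_apply, hψ, hμ, Algebra.TensorProduct.productMap_apply_tmul,
      Algebra.TensorProduct.lmul'_apply_tmul, map_mul, hsame]
  have hfst : TrivSqZeroExt.fst (ψ (1 - e)) = 0 := by
    have := congrFun (congrArg (↑·) hcomp) (1 - e)
    simp only [AlgHom.comp_apply] at this
    have hμ1e : μ (1 - e) = 0 := by rw [map_sub, map_one, hμe, sub_self]
    calc TrivSqZeroExt.fst (ψ (1 - e)) = F (ψ (1 - e)) := rfl
      _ = F (φ₁ (μ (1 - e))) := this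
      _ = 0 := by rw [hμ1e, map_zero, map_zero]
  -- evaluate ψ on δ
  have hψδ : ψ δ = - DualNumber.eps := by
    simp only [hδ, hψ, map_sub, Algebra.TensorProduct.productMap_apply_tmul, map_one,
      mul_one, one_mul, hφ₁, hφ₂, hx, AdjoinRoot.liftAlgHom_root]
    rw [zero_sub]
  have : (- DualNumber.eps : S) = (- DualNumber.eps : S) * ψ (1 - e) := by
    rw [← hψδ, ← map_mul, hδe]
  -- derive contradiction
  set w := ψ (1 - e) with hw
  have hdecomp : w = TrivSqZeroExt.inl (TrivSqZeroExt.fst w)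
      + TrivSqZeroExt.inr (TrivSqZeroExt.snd w) :=
    (TrivSqZeroExt.inl_fst_add_inr_snd_eq w).symm
  rw [hdecomp, hfst] at this
  simp only [TrivSqZeroExt.inl_zero, zero_add, neg_mul] at this
  have heps : (DualNumber.eps : S) * TrivSqZeroExt.inr (TrivSqZeroExt.snd w) = 0 := by
    rw [DualNumber.eps, TrivSqZeroExt.inr_mul_inr]
  rw [heps, neg_zero] at this
  have heq : (DualNumber.eps : S) = 0 := neg_eq_zero.mp this
  have h10 : (1 : K) = 0 := by
    have := congrArg TrivSqZeroExt.snd heq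
    simpa using this
  exact one_ne_zero h10

theorem surj_of_unit {R : Type*} [CommRing R] (u b : R) (h : IsUnit u) :
    Function.Surjective (algebraMap R (AdjoinRoot (C u * X + C b))) := by
  obtain ⟨v, hv⟩ := h
  set f : R[X] := C u * X + C b with hf
  set B := AdjoinRoot f with hB
  have hrel : AdjoinRoot.of f u * AdjoinRoot.root f + AdjoinRoot.of f b = 0 := by
    have := AdjoinRoot.eval₂_root f
    simpa [hf] using this
  have hur : AdjoinRoot.of f u * AdjoinRoot.root f = - AdjoinRoot.of f b :=
    eq_neg_of_add_eq_zero_left hrel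
  have hroot : AdjoinRoot.root f = algebraMap R B ((↑v⁻¹ : R) * (-b)) := by
    rw [AdjoinRoot.algebraMap_eq, map_mul, map_neg, ← hur, ← mul_assoc, ← map_mul,
      ← hv, Units.inv_mul, map_one, one_mul]
  intro z
  obtain ⟨g, rfl⟩ := AdjoinRoot.mk_surjective (g := f) z
  refine ⟨g.eval ((↑v⁻¹ : R) * (-b)), ?_⟩
  rw [← AdjoinRoot.aeval_eq, hroot, aeval_algebraMap_apply]
  simp

theorem subsingleton_of_nilpotent_unit {R : Type*} [CommRing R] (u b : R)
    (hu : IsNilpotent u) (hb : IsUnit b) :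
    Subsingleton (AdjoinRoot (C u * X + C b)) := by
  set f : R[X] := C u * X + C b with hf
  have hrel : AdjoinRoot.of f u * AdjoinRoot.root f + AdjoinRoot.of f b = 0 := by
    have := AdjoinRoot.eval₂_root f
    simpa [hf] using this
  have hbnil : IsNilpotent (AdjoinRoot.of f b) := by
    rw [eq_neg_of_add_eq_zero_right hrel]
    exact ((Commute.all _ _).isNilpotent_mul_right (hu.map (AdjoinRoot.of f))).neg
  have hbunit : IsUnit (AdjoinRoot.of f b) := hb.map _
  obtain ⟨n, hn⟩ := hbnil
  have : IsUnit (0 : AdjoinRoot f) := hn ▸ hbunit.pow n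
  exact subsingleton_of_zero_eq_one (isUnit_zero_iff.mp this)

theorem zmod_nonunit_dvd (p k : ℕ) [hp : Fact p.Prime] (hk : 1 ≤ k) (c : ZMod (p ^ k))
    (hc : ¬ IsUnit c) : p ∣ c.val := by
  haveI : NeZero (p ^ k) := ⟨pow_ne_zero k hp.out.ne_zero⟩
  by_contra hdvd
  apply hc
  have hcop : Nat.Coprime c.val p := (Nat.coprime_comm.mp ((hp.out.coprime_iff_not_dvd).mpr hdvd))
  have : IsUnit ((c.val : ℕ) : ZMod (p ^ k)) :=
    (ZMod.isUnit_iff_coprime _ _).mpr (Nat.Coprime.pow_right k hcop)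
  rwa [ZMod.natCast_rightInverse c] at this

theorem zmod_nonunit_cast (p k : ℕ) [hp : Fact p.Prime] (hk : 1 ≤ k) (c : ZMod (p ^ k))
    (hc : ¬ IsUnit c) :
    ZMod.castHom (dvd_pow_self p (Nat.one_le_iff_ne_zero.mp hk)) (ZMod p) c = 0 := by
  haveI : NeZero (p ^ k) := ⟨pow_ne_zero k hp.out.ne_zero⟩
  have h := zmod_nonunit_dvd p k hk c hc
  rw [ZMod.castHom_apply, ← ZMod.natCast_val]
  exact (ZMod.natCast_eq_zero_iff _ _).mpr h

theorem zmod_nonunit_nilpotent (p k : ℕ) [hp : Fact p.Prime] (hk : 1 ≤ k) (c : ZMod (p ^ k))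
    (hc : ¬ IsUnit c) : IsNilpotent c := by
  haveI : NeZero (p ^ k) := ⟨pow_ne_zero k hp.out.ne_zero⟩
  obtain ⟨m, hm⟩ := zmod_nonunit_dvd p k hk c hc
  refine ⟨k, ?_⟩
  have : c = ((p * m : ℕ) : ZMod (p ^ k)) := by rw [← hm, ZMod.natCast_rightInverse c]
  have h2 : ((p : ZMod (p ^ k))) ^ k = 0 := by rw [← Nat.cast_pow, ZMod.natCast_self]
  rw [this, Nat.cast_mul, mul_pow, h2, zero_mul]

open Finset in
theorem count_pairs (p k : ℕ) (hp : p.Prime) (hk : 1 ≤ k) :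
    Nat.card {x : ZMod (p ^ k) × ZMod (p ^ k) //
        x.1 ≠ 0 ∧ (IsUnit x.1 ∨ IsUnit x.2)}
      = Nat.totient (p ^ k) * (p ^ k + p ^ (k - 1) - 1) := by
  haveI : Fact p.Prime := ⟨hp⟩
  haveI : NeZero (p ^ k) := ⟨pow_ne_zero k hp.ne_zero⟩
  classical
  set R := ZMod (p ^ k) with hR
  have hunits : (univ.filter (fun u : R => IsUnit u)).card = Nat.totient (p ^ k) := by
    rw [← ZMod.card_units_eq_totient (p ^ k), ← Fintype.card_subtype]
    exact Fintype.card_congr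
      ⟨fun w => w.2.unit, fun v => ⟨(v : R), v.isUnit⟩,
        fun w => Subtype.ext w.2.unit_spec, fun v => Units.ext (IsUnit.unit_spec _)⟩
  have hcardR : Fintype.card R = p ^ k := ZMod.card (p ^ k)
  have htot : Nat.totient (p ^ k) = p ^ (k - 1) * (p - 1) := by
    exact Nat.totient_prime_pow hp (show 0 < k by omega)
  have hnonunits : (univ.filter (fun u : R => ¬ IsUnit u)).card = p ^ (k - 1) := by
    have := Finset.card_filter_add_card_filter_not
      (s := (univ : Finset R)) (p := fun u : R => IsUnit u)
    rw [Finset.card_univ, hcardR, hunits] at this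
    have hk' : p ^ k = p ^ (k - 1) * p := by
      conv_lhs => rw [show k = (k - 1) + 1 by omega]
      rw [pow_succ]
    have h3 : p ^ (k - 1) * (p - 1) + p ^ (k - 1) = p ^ (k - 1) * p := by
      rw [← Nat.mul_succ, Nat.succ_eq_add_one, Nat.sub_add_cancel hp.one_le]
    omega
  haveI : Nontrivial R := by
    have : 1 < p ^ k := Nat.one_lt_pow (by omega) hp.one_lt
    exact ZMod.nontrivial_iff.mpr (by omega)
  have hz : (0 : R) ∈ univ.filter (fun u : R => ¬ IsUnit u) := by
    simp [not_isUnit_zero]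
  have hnz : (univ.filter (fun u : R => u ≠ 0 ∧ ¬ IsUnit u)).card = p ^ (k - 1) - 1 := by
    have hset : univ.filter (fun u : R => u ≠ 0 ∧ ¬ IsUnit u)
        = (univ.filter (fun u : R => ¬ IsUnit u)).erase 0 := by
      ext u
      simp [Finset.mem_erase, and_comm]
    rw [hset, Finset.card_erase_of_mem hz, hnonunits]
  rw [Nat.card_eq_fintype_card, Fintype.card_subtype]
  have hiff : ∀ x : R × R, (x.1 ≠ 0 ∧ (IsUnit x.1 ∨ IsUnit x.2))
      ↔ ((IsUnit x.1 ∧ True) ∨ ((x.1 ≠ 0 ∧ ¬ IsUnit x.1) ∧ IsUnit x.2)) := by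
    intro x
    constructor
    · rintro ⟨h0, h | h⟩
      · exact Or.inl ⟨h, trivial⟩
      · by_cases hu : IsUnit x.1
        · exact Or.inl ⟨hu, trivial⟩
        · exact Or.inr ⟨⟨h0, hu⟩, h⟩
    · rintro (⟨h, -⟩ | ⟨⟨h0, -⟩, h⟩)
      · exact ⟨h.ne_zero, Or.inl h⟩
      · exact ⟨h0, Or.inr h⟩
  rw [Finset.filter_congr (fun x _ => hiff x), Finset.filter_or]
  rw [Finset.card_union_of_disjoint]
  · rw [← Finset.univ_product_univ, Finset.filter_product (fun u : R => IsUnit u) (fun _ : R => True),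
      Finset.filter_product (fun u : R => u ≠ 0 ∧ ¬ IsUnit u) (fun b : R => IsUnit b),
      Finset.card_product, Finset.card_product, Finset.filter_true, hunits, hnz,
      Finset.card_univ, hcardR]
    rw [show p ^ k + p ^ (k - 1) - 1 = p ^ k + (p ^ (k - 1) - 1) by
      have : 1 ≤ p ^ (k - 1) := Nat.one_le_pow _ _ hp.pos
      omega]
    rw [Nat.mul_add]
    ring
  · rw [Finset.disjoint_left]
    rintro x hx hx'
    simp only [Finset.mem_filter] at hx hx'
    exact hx'.2.1.2 hx.2.1

open Finset in
theorem sep_iff (p k : ℕ) [hp : Fact p.Prime] (hk : 1 ≤ k) (u b : ZMod (p ^ k)) :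
    (C u * X + C b).IsSeparablePoly ↔ IsUnit u ∨ IsUnit b := by
  constructor
  · intro h
    by_contra hcon
    push_neg at hcon
    haveI : Fact (1 < p) := ⟨hp.out.one_lt⟩
    exact not_sep (ZMod.castHom (dvd_pow_self p (Nat.one_le_iff_ne_zero.mp hk)) (ZMod p)) u b
      (zmod_nonunit_cast p k hk u hcon.1) (zmod_nonunit_cast p k hk b hcon.2) h
  · rintro (h | h)
    · exact isSeparableAlgebra_of_surj (surj_of_unit u b h)
    · by_cases hu : IsUnit u
      · exact isSeparableAlgebra_of_surj (surj_of_unit u b hu)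
      · haveI := subsingleton_of_nilpotent_unit u b (zmod_nonunit_nilpotent p k hk u hu) h
        exact isSeparableAlgebra_of_surj (fun z => ⟨0, Subsingleton.elim _ _⟩)


/-- The number of separable polynomials of degree exactly 1 in `(ℤ/p^k)[x]` is
`φ(p^k)(p^k + p^(k-1) - 1)`. -/
theorem count_linear_separable (p k : ℕ) (hp : p.Prime) (hk : 1 ≤ k) :
    Nat.card {f : (ZMod (p ^ k))[X] | f.natDegree = 1 ∧ f.IsSeparablePoly}
      = Nat.totient (p ^ k) * (p ^ k + p ^ (k - 1) - 1) := by
  haveI : Fact p.Prime := ⟨hp⟩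
  classical
  refine (Nat.card_congr ?_).trans (count_pairs p k hp hk)
  have hrepr : ∀ f : (ZMod (p ^ k))[X], f.natDegree = 1 →
      f = C (f.coeff 1) * X + C (f.coeff 0) := by
    intro f hdeg
    apply eq_X_add_C_of_degree_le_one
    calc f.degree ≤ (f.natDegree : WithBot ℕ) := Polynomial.degree_le_natDegree
      _ = (1 : WithBot ℕ) := by rw [hdeg, Nat.cast_one]
  refine
    { toFun := fun f => ⟨((f : (ZMod (p ^ k))[X]).coeff 1, (f : (ZMod (p ^ k))[X]).coeff 0), ?_⟩
      invFun := fun x => ⟨C x.1.1 * X + C x.1.2, ?_⟩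
      left_inv := ?_
      right_inv := ?_ }
  · obtain ⟨hdeg, hsep⟩ := f.2
    have hne : (f : (ZMod (p ^ k))[X]).coeff 1 ≠ 0 := by
      have hf0 : (f : (ZMod (p ^ k))[X]) ≠ 0 := fun h0 => by simp [h0] at hdeg
      have := Polynomial.leadingCoeff_ne_zero.mpr hf0
      rwa [Polynomial.leadingCoeff, hdeg] at this
    refine ⟨hne, ?_⟩
    rw [← sep_iff p k hk]
    rw [hrepr _ hdeg] at hsep
    exact hsep
  · exact ⟨Polynomial.natDegree_linear x.2.1, (sep_iff p k hk _ _).mpr x.2.2⟩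
  · intro f
    exact Subtype.ext (hrepr _ f.2.1).symm
  · intro x
    apply Subtype.ext
    apply Prod.ext <;> simp
end
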